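/- arXiv:1801.08231 — 8 statements merged into one kernel-verified Lean document; each statement's English description precedes it below -/
import Mathlib

section
/- For every n-rook a, the two expressions for its length agree: (Σ_{i : a(i)≠0} (a(i) + n − i)) − coinv(a) = Σ_{i=1}^{n} a(i) + inv(a), where coinv(a) = #{(i,j) : i < j and 0 < a(i) < a(j)} and inv(a) = #{(i,j) : i < j and a(i) > a(j)}. -/
open scoped Classical

/-- An `n`-rook in one-line notation: a function `a : Fin n → ℕ` (position `i`
represents position `i+1` in 1-based notation) with values in `{0,…,n}`, whose
nonzero values are pairwise distinct. `a i = 0` means position `i` is vacant. -/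
def IsRook (n : ℕ) (a : Fin n → ℕ) : Prop :=
  (∀ i, a i ≤ n) ∧ ∀ i j, a i ≠ 0 → a i = a j → i = j

/-- The rank of a rook: the number of nonzero entries. -/
def rookRank (n : ℕ) (a : Fin n → ℕ) : ℕ :=
  (Finset.univ.filter (fun i => a i ≠ 0)).card

/-- `inv(a) = #{(i,j) : i < j ∧ a i > a j}`. -/
def rookInv (n : ℕ) (a : Fin n → ℕ) : ℕ :=
  (Finset.univ.filter (fun p : Fin n × Fin n => p.1 < p.2 ∧ a p.2 < a p.1)).card

/-- `coinv(a) = #{(i,j) : i < j ∧ 0 < a i < a j}`. -/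
def rookCoinv (n : ℕ) (a : Fin n → ℕ) : ℕ :=
  (Finset.univ.filter (fun p : Fin n × Fin n => p.1 < p.2 ∧ 0 < a p.1 ∧ a p.1 < a p.2)).card

/-- The length `ℓ(a) = Σ a i + inv(a)`. -/
def rookLen (n : ℕ) (a : Fin n → ℕ) : ℕ :=
  (∑ i, a i) + rookInv n a

theorem key (n : ℕ) (a : Fin n → ℕ) (ha : IsRook n a) :
    ∑ i ∈ Finset.univ.filter (fun i => a i ≠ 0), (a i + n - (i.val + 1))
      = (∑ i : Fin n, a i) + rookInv n a + rookCoinv n a := by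
  obtain ⟨hle, hinj⟩ := ha
  have hsplit : ∑ i ∈ Finset.univ.filter (fun i => a i ≠ 0), (a i + n - (i.val + 1))
      = (∑ i : Fin n, a i) + ∑ i ∈ Finset.univ.filter (fun i => a i ≠ 0), (n - (i.val + 1)) := by
    have step : ∀ i ∈ Finset.univ.filter (fun i => a i ≠ 0),
        a i + n - (i.val + 1) = a i + (n - (i.val + 1)) := by
      intro i _; have : i.val + 1 ≤ n := i.isLt; omega
    rw [Finset.sum_congr rfl step, Finset.sum_add_distrib]
    rw [Finset.sum_filter_of_ne (f := a) (fun i _ h => h)]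
  rw [hsplit, add_assoc]
  congr 1
  -- count pairs
  have hcount : ∑ i ∈ Finset.univ.filter (fun i => a i ≠ 0), (n - (i.val + 1))
      = (Finset.univ.filter (fun p : Fin n × Fin n => p.1 < p.2 ∧ a p.1 ≠ 0)).card := by
    rw [Finset.card_eq_sum_card_fiberwise
      (f := fun p : Fin n × Fin n => p.1) (t := Finset.univ) (fun _ _ => Finset.mem_univ _)]
    rw [Finset.sum_filter]
    apply Finset.sum_congr rfl
    intro i _
    by_cases h : a i ≠ 0
    · rw [if_pos h]
      have : ((Finset.univ.filter fun p : Fin n × Fin n => p.1 < p.2 ∧ a p.1 ≠ 0).filter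
          fun p => p.1 = i).card = (Finset.Ioi i).card := by
        apply Finset.card_bij (fun p _ => p.2)
        · intro p hp
          simp only [Finset.mem_filter, Finset.mem_univ, true_and] at hp
          rw [Finset.mem_Ioi]
          exact hp.2 ▸ hp.1.1
        · intro p hp q hq hpq
          simp only [Finset.mem_filter, Finset.mem_univ, true_and] at hp hq
          exact Prod.ext (hp.2.trans hq.2.symm) hpq
        · intro j hj
          refine ⟨(i, j), ?_, rfl⟩
          simp only [Finset.mem_filter, Finset.mem_univ, true_and]
          exact ⟨⟨Finset.mem_Ioi.1 hj, h⟩, trivial⟩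
      rw [this, Fin.card_Ioi]
      omega
    · rw [if_neg h]
      symm
      rw [Finset.card_eq_zero]
      ext p
      simp only [Finset.mem_filter, Finset.mem_univ, true_and, Finset.notMem_empty, iff_false]
      rintro ⟨⟨-, hne⟩, rfl⟩
      exact h hne
  rw [hcount]
  -- split pair set
  have hunion : (Finset.univ.filter (fun p : Fin n × Fin n => p.1 < p.2 ∧ a p.1 ≠ 0))
      = (Finset.univ.filter (fun p : Fin n × Fin n => p.1 < p.2 ∧ a p.2 < a p.1))
        ∪ (Finset.univ.filter (fun p : Fin n × Fin n => p.1 < p.2 ∧ 0 < a p.1 ∧ a p.1 < a p.2)) := by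
    ext p
    simp only [Finset.mem_filter, Finset.mem_union, Finset.mem_univ, true_and]
    constructor
    · rintro ⟨hlt, hne⟩
      rcases lt_trichotomy (a p.1) (a p.2) with h | h | h
      · exact Or.inr ⟨hlt, Nat.pos_of_ne_zero hne, h⟩
      · exact absurd (hinj p.1 p.2 hne h) (ne_of_lt hlt)
      · exact Or.inl ⟨hlt, h⟩
    · rintro (⟨hlt, h⟩ | ⟨hlt, h1, h2⟩)
      · exact ⟨hlt, by omega⟩
      · exact ⟨hlt, by omega⟩
  rw [hunion, Finset.card_union_of_disjoint, rookInv, rookCoinv]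
  rw [Finset.disjoint_filter]
  rintro p - ⟨hlt, h⟩ ⟨-, -, h2⟩
  omega


/-- For every `n`-rook `a`,
`(Σ_{i : a(i)≠0} (a(i) + n − i)) − coinv(a) = Σ_{i=1}^{n} a(i) + inv(a)`
(positions are 1-based, so position `i : Fin n` is `i+1`). -/
theorem stmt0 (n : ℕ) (a : Fin n → ℕ) (ha : IsRook n a) :
    ((∑ i ∈ Finset.univ.filter (fun i => a i ≠ 0), (a i + n - (i.val + 1)) : ℕ) : ℤ)
        - (rookCoinv n a : ℤ)
      = (∑ i : Fin n, (a i : ℤ)) + (rookInv n a : ℤ) := by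
  have := key n a ha
  have h2 : (∑ i : Fin n, (a i : ℤ)) = ((∑ i : Fin n, a i : ℕ) : ℤ) := by push_cast; rfl
  rw [h2]
  omega
end

section
/- For every set partition A of {1,…,n}, ℓ(φ(A)) = t(A); that is, the length of the strictly upper triangular n-rook associated to A equals the depth-index of A. -/
open scoped Classical

/-- `(i,j)` is an arc of the set partition `P` of `{1,…,n}` (realized on `Fin n`):
`i < j`, both lie in a common block, and no element of that block is strictly
between `i` and `j`. -/
def IsArc {n : ℕ} (P : Finpartition (Finset.univ : Finset (Fin n))) (i j : Fin n) : Prop :=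
  i < j ∧ ∃ b ∈ P.parts, i ∈ b ∧ j ∈ b ∧ ∀ k ∈ b, ¬(i < k ∧ k < j)

/-- The finite set of arcs of a set partition. -/
noncomputable def arcs {n : ℕ} (P : Finpartition (Finset.univ : Finset (Fin n))) :
    Finset (Fin n × Fin n) :=
  Finset.univ.filter (fun p => IsArc P p.1 p.2)

/-- Depth of a vertex `v`: the number of arcs `(r,s)` with `r < v < s`. -/
noncomputable def depthV {n : ℕ} (P : Finpartition (Finset.univ : Finset (Fin n)))
    (v : Fin n) : ℕ :=
  ((arcs P).filter (fun p => p.1 < v ∧ v < p.2)).card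

/-- Depth of an arc `α = (i,j)`: the number of arcs `(r,s)` with `r < i` and `s > j`. -/
noncomputable def depthArc {n : ℕ} (P : Finpartition (Finset.univ : Finset (Fin n)))
    (α : Fin n × Fin n) : ℕ :=
  ((arcs P).filter (fun p => p.1 < α.1 ∧ α.2 < p.2)).card

/-- Depth of a block `b` (with minimum `i` and maximum `j`): the number of arcs
`(r,s)` with `r < i` and `s > j`; equivalently (for the nonempty blocks of a
partition) the arcs lying strictly above every vertex of `b`. -/
noncomputable def depthBlock {n : ℕ} (P : Finpartition (Finset.univ : Finset (Fin n)))
    (b : Finset (Fin n)) : ℕ :=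
  ((arcs P).filter (fun p => ∀ v ∈ b, p.1 < v ∧ v < p.2)).card

/-- Two arcs `(i,j)` and `(r,s)` cross if `i < r < j < s` or `r < i < s < j`. -/
def ArcCross {n : ℕ} (α β : Fin n × Fin n) : Prop :=
  (α.1 < β.1 ∧ β.1 < α.2 ∧ α.2 < β.2) ∨ (β.1 < α.1 ∧ α.1 < β.2 ∧ β.2 < α.2)

/-- `cross(α)`: the number of blocks of `P` containing at least one arc crossing `α`. -/
noncomputable def crossNum {n : ℕ} (P : Finpartition (Finset.univ : Finset (Fin n)))
    (α : Fin n × Fin n) : ℕ :=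
  (P.parts.filter (fun b => ∃ p ∈ arcs P, p.1 ∈ b ∧ p.2 ∈ b ∧ ArcCross α p)).card

/-- The depth-index `t(A) = Σ_{i=1}^{k}(n−i) − Σ_v depth(v) + Σ_α depth(α)`,
where `k` is the number of arcs. -/
noncomputable def tIdx {n : ℕ} (P : Finpartition (Finset.univ : Finset (Fin n))) : ℤ :=
  (∑ i ∈ Finset.range (arcs P).card, ((n : ℤ) - (i + 1)))
    - (∑ v : Fin n, (depthV P v : ℤ))
    + ∑ α ∈ arcs P, (depthArc P α : ℤ)

/-- The crossing-index `c(A) = Σ_{i=1}^{k}(n−i) − Σ_β depth(β) − Σ_α cross(α)`. -/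
noncomputable def cIdx {n : ℕ} (P : Finpartition (Finset.univ : Finset (Fin n))) : ℤ :=
  (∑ i ∈ Finset.range (arcs P).card, ((n : ℤ) - (i + 1)))
    - (∑ b ∈ P.parts, (depthBlock P b : ℤ))
    - ∑ α ∈ arcs P, (crossNum P α : ℤ)

/-- The rook `φ(A)` associated to a set partition: `φ(A)(j) = i` (in 1-based
values) whenever `(i,j)` is an arc, and `φ(A)(j) = 0` otherwise. Since at most
one arc ends at `j`, the sum below picks out that unique value. -/
noncomputable def phiRook {n : ℕ} (P : Finpartition (Finset.univ : Finset (Fin n))) :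
    Fin n → ℕ :=
  fun j => ∑ i : Fin n, if IsArc P i j then i.val + 1 else 0

section Aux

variable {n : ℕ} (P : Finpartition (Finset.univ : Finset (Fin n)))

lemma arc_unique_left {i i' j : Fin n} (h : IsArc P i j) (h' : IsArc P i' j) : i = i' := by
  obtain ⟨hij, b, hb, hib, hjb, hbet⟩ := h
  obtain ⟨hij', b', hb', hib', hjb', hbet'⟩ := h'
  have hbb : b = b' := P.eq_of_mem_parts hb hb' hjb hjb'
  subst hbb
  by_contra hne
  rcases lt_or_gt_of_ne hne with hlt | hgt
  · exact hbet i' hib' ⟨hlt, hij'⟩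
  · exact hbet' i hib ⟨hgt, hij⟩

lemma mem_arcs {α : Fin n × Fin n} : α ∈ arcs P ↔ IsArc P α.1 α.2 := by
  simp [arcs]

lemma phiRook_of_arc {i j : Fin n} (h : IsArc P i j) : phiRook P j = i.val + 1 := by
  unfold phiRook
  rw [Finset.sum_eq_single_of_mem i (Finset.mem_univ i)]
  · rw [if_pos h]
  · intro i' _ hne
    rw [if_neg]
    intro h'
    exact hne (arc_unique_left P h' h)

lemma phiRook_eq_zero {j : Fin n} (h : ∀ i, ¬ IsArc P i j) : phiRook P j = 0 :=
  Finset.sum_eq_zero fun i _ => if_neg (h i)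

lemma exists_arc_of_ne_zero {j : Fin n} (h : phiRook P j ≠ 0) : ∃ i, IsArc P i j := by
  by_contra hc; push_neg at hc; exact h (phiRook_eq_zero P hc)

lemma phiRook_pos_iff {j : Fin n} : 0 < phiRook P j ↔ j ∈ (arcs P).image Prod.snd := by
  constructor
  · intro h
    obtain ⟨i, hi⟩ := exists_arc_of_ne_zero P (Nat.pos_iff_ne_zero.mp h)
    exact Finset.mem_image.mpr ⟨(i, j), (mem_arcs P).mpr hi, rfl⟩
  · intro h
    obtain ⟨α, hα, hsnd⟩ := Finset.mem_image.mp h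
    have := phiRook_of_arc P ((mem_arcs P).mp hα)
    rw [hsnd] at this
    omega

lemma snd_injOn : ∀ α ∈ arcs P, ∀ β ∈ arcs P, Prod.snd α = Prod.snd β → α = β := by
  intro α hα β hβ h
  have hα' := (mem_arcs P).mp hα
  have hβ' := (mem_arcs P).mp hβ
  rw [h] at hα'
  exact Prod.ext (arc_unique_left P hα' hβ') h

/-- The sum of the rook entries equals the sum over arcs of the (1-based) left ends. -/
lemma sum_phiRook : (∑ j, phiRook P j) = ∑ α ∈ arcs P, (α.1.val + 1) := by
  unfold phiRook
  rw [Finset.sum_comm]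
  rw [arcs, Finset.sum_filter, ← Finset.univ_product_univ, Finset.sum_product]

/-- Sum of vertex depths. -/
lemma sum_depthV : (∑ v, depthV P v) = ∑ α ∈ arcs P, (α.2.val - α.1.val - 1) := by
  unfold depthV
  simp_rw [Finset.card_filter]
  rw [Finset.sum_comm]
  refine Finset.sum_congr rfl fun α hα => ?_
  rw [← Finset.card_filter]
  have h1 : Finset.filter (fun v => α.1 < v ∧ v < α.2) Finset.univ = Finset.Ioo α.1 α.2 := by
    ext v; simp [Finset.mem_Ioo]
  rw [h1, Fin.card_Ioo]

/-- The "both nonzero" inversions count: equals the sum of arc depths. -/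
lemma card_inv_nonzero :
    (Finset.univ.filter (fun p : Fin n × Fin n =>
        p.1 < p.2 ∧ 0 < phiRook P p.2 ∧ phiRook P p.2 < phiRook P p.1)).card
      = ∑ α ∈ arcs P, depthArc P α := by
  have hsum : (∑ α ∈ arcs P, depthArc P α) =
      ((arcs P ×ˢ arcs P).filter (fun z : (Fin n × Fin n) × (Fin n × Fin n) =>
        z.2.1 < z.1.1 ∧ z.1.2 < z.2.2)).card := by
    unfold depthArc
    rw [Finset.card_filter, Finset.sum_product]
    refine Finset.sum_congr rfl fun α hα => ?_
    rw [Finset.card_filter]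
  rw [hsum]
  refine (Finset.card_bij (fun z _ => (z.1.2, z.2.2)) ?_ ?_ ?_).symm
  · intro z hz
    rw [Finset.mem_filter] at hz
    obtain ⟨hzm, hlt1, hlt2⟩ := hz
    rw [Finset.mem_product] at hzm
    have h1 := phiRook_of_arc P ((mem_arcs P).mp hzm.1)
    have h2 := phiRook_of_arc P ((mem_arcs P).mp hzm.2)
    refine Finset.mem_filter.mpr ⟨Finset.mem_univ _, hlt2, ?_, ?_⟩
    · rw [h2]; omega
    · rw [h1, h2]
      have : z.2.1.val < z.1.1.val := hlt1
      omega
  · intro z hz z' hz' heq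
    rw [Finset.mem_filter, Finset.mem_product] at hz hz'
    rw [Prod.mk.injEq] at heq
    have e1 : z.1 = z'.1 := by
      apply snd_injOn P _ hz.1.1 _ hz'.1.1 heq.1
    have e2 : z.2 = z'.2 := by
      apply snd_injOn P _ hz.1.2 _ hz'.1.2 heq.2
    exact Prod.ext e1 e2
  · intro b hb
    rw [Finset.mem_filter] at hb
    obtain ⟨-, hlt, hpos, hvlt⟩ := hb
    obtain ⟨i₂, hi₂⟩ := exists_arc_of_ne_zero P (Nat.pos_iff_ne_zero.mp hpos)
    have hpos1 : phiRook P b.1 ≠ 0 := by omega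
    obtain ⟨i₁, hi₁⟩ := exists_arc_of_ne_zero P hpos1
    have h1 := phiRook_of_arc P hi₁
    have h2 := phiRook_of_arc P hi₂
    refine ⟨((i₁, b.1), (i₂, b.2)), ?_, rfl⟩
    refine Finset.mem_filter.mpr ⟨Finset.mem_product.mpr
      ⟨(mem_arcs P).mpr hi₁, (mem_arcs P).mpr hi₂⟩, ?_, hlt⟩
    show i₂ < i₁
    rw [Fin.lt_def]
    omega

/-- Counting pairs `p < q` with `phiRook p ≠ 0`. -/
lemma card_B :
    (Finset.univ.filter (fun p : Fin n × Fin n =>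
        p.1 < p.2 ∧ 0 < phiRook P p.1)).card
      = ∑ α ∈ arcs P, (n - 1 - α.2.val) := by
  rw [Finset.card_filter, ← Finset.univ_product_univ, Finset.sum_product]
  have h1 : ∀ i : Fin n,
      (∑ j : Fin n, if ((i, j) : Fin n × Fin n).1 < (i, j).2 ∧ 0 < phiRook P (i, j).1 then 1 else 0)
        = if 0 < phiRook P i then (n - 1 - i.val) else 0 := by
    intro i
    by_cases h : 0 < phiRook P i
    · simp only [h, and_true, if_true]
      rw [← Finset.card_filter]
      have : Finset.filter (fun j : Fin n => i < j) Finset.univ = Finset.Ioi i := by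
        ext j; simp [Finset.mem_Ioi]
      rw [this, Fin.card_Ioi]
    · simp [h]
  rw [Finset.sum_congr rfl fun i _ => h1 i, ← Finset.sum_filter]
  have h2 : Finset.filter (fun i : Fin n => 0 < phiRook P i) Finset.univ
      = (arcs P).image Prod.snd := by
    ext i; simp only [Finset.mem_filter, Finset.mem_univ, true_and]
    exact phiRook_pos_iff P
  rw [h2, Finset.sum_image (snd_injOn P)]

/-- Twice the count of increasing pairs in a finset equals `k² − k`. -/
lemma two_mul_card_lt_pairs (s : Finset (Fin n)) :
    ((s ×ˢ s).filter (fun p : Fin n × Fin n => p.1 < p.2)).card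
      + ((s ×ˢ s).filter (fun p : Fin n × Fin n => p.1 < p.2)).card
      = s.card * s.card - s.card := by
  have hswap : ((s.offDiag).filter (fun p : Fin n × Fin n => ¬ p.1 < p.2)).card
      = ((s.offDiag).filter (fun p : Fin n × Fin n => p.1 < p.2)).card := by
    refine Finset.card_bij' (fun p _ => Prod.swap p) (fun p _ => Prod.swap p) ?_ ?_ ?_ ?_
    · intro p hp
      rw [Finset.mem_filter, Finset.mem_offDiag] at hp ⊢
      obtain ⟨⟨h1, h2, h3⟩, h4⟩ := hp
      exact ⟨⟨h2, h1, Ne.symm h3⟩, (h3.lt_or_gt.resolve_left h4 : p.2 < p.1)⟩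
    · intro p hp
      rw [Finset.mem_filter, Finset.mem_offDiag] at hp ⊢
      obtain ⟨⟨h1, h2, h3⟩, h4⟩ := hp
      exact ⟨⟨h2, h1, Ne.symm h3⟩, not_lt.mpr h4.le⟩
    · intro p _; exact Prod.swap_swap p
    · intro p _; exact Prod.swap_swap p
  have hoff : ((s.offDiag).filter (fun p : Fin n × Fin n => p.1 < p.2)).card
      + ((s.offDiag).filter (fun p : Fin n × Fin n => ¬ p.1 < p.2)).card
      = s.offDiag.card := Finset.card_filter_add_card_filter_not _
  have heq : ((s ×ˢ s).filter (fun p : Fin n × Fin n => p.1 < p.2))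
      = ((s.offDiag).filter (fun p : Fin n × Fin n => p.1 < p.2)) := by
    ext p
    simp only [Finset.mem_filter, Finset.mem_product, Finset.mem_offDiag]
    constructor
    · rintro ⟨⟨h1, h2⟩, h3⟩; exact ⟨⟨h1, h2, h3.ne⟩, h3⟩
    · rintro ⟨⟨h1, h2, -⟩, h3⟩; exact ⟨⟨h1, h2⟩, h3⟩
  rw [heq]
  rw [hswap] at hoff
  rw [hoff, Finset.offDiag_card]

lemma fcard_congr {γ : Type*} (s : Finset γ) (p q : γ → Prop) [DecidablePred p]
    [DecidablePred q] (h : ∀ x, p x ↔ q x) : (s.filter p).card = (s.filter q).card := by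
  rw [Finset.card_filter, Finset.card_filter]
  refine Finset.sum_congr rfl fun x _ => ?_
  by_cases hx : p x
  · rw [if_pos hx, if_pos ((h x).mp hx)]
  · rw [if_neg hx, if_neg (fun hq => hx ((h x).mpr hq))]

lemma card_filter_split {γ : Type*} [Fintype γ] (Q R : γ → Prop) [DecidablePred Q]
    [DecidablePred R] [∀ x, Decidable (Q x ∧ R x)] [∀ x, Decidable (Q x ∧ ¬ R x)] :
    (Finset.univ.filter Q).card
      = (Finset.univ.filter (fun x => Q x ∧ R x)).card
        + (Finset.univ.filter (fun x => Q x ∧ ¬ R x)).card := by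
  rw [Finset.card_filter, Finset.card_filter, Finset.card_filter, ← Finset.sum_add_distrib]
  refine Finset.sum_congr rfl fun x _ => ?_
  by_cases h1 : Q x <;> by_cases h2 : R x <;> simp [h1, h2]

end Aux

/-- for every set partition `A` of `{1,…,n}`, the length of the
associated strictly upper triangular `n`-rook equals the depth-index:
`ℓ(φ(A)) = t(A)`. -/
theorem stmt2 (n : ℕ) (P : Finpartition (Finset.univ : Finset (Fin n))) :
    (rookLen n (phiRook P) : ℤ) = tIdx P := by
  classical
  set a := phiRook P with ha
  set A := arcs P with hA
  set k := A.card with hk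
  -- basic cast helpers for sums over arcs
  have harc_lt : ∀ α ∈ A, α.1.val < α.2.val := by
    intro α hα
    exact (mem_arcs P).mp hα |>.1
  have harc_ub : ∀ α ∈ A, α.2.val < n := fun α _ => α.2.isLt
  -- E2 : sum of entries
  have E2 : ((∑ j, a j : ℕ) : ℤ) = ∑ α ∈ A, ((α.1.val : ℤ) + 1) := by
    rw [ha, sum_phiRook P]
    push_cast
    rfl
  -- split of inversion count
  have hsplit : ∀ (Q R : Fin n × Fin n → Prop),
      (Finset.univ.filter Q).card
        = (Finset.univ.filter (fun x => Q x ∧ R x)).card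
          + (Finset.univ.filter (fun x => Q x ∧ ¬ R x)).card := by
    intro Q R
    rw [← Finset.filter_filter, ← Finset.filter_filter,
      Finset.card_filter_add_card_filter_not]
  -- E3 : inv = I0 + I1
  have E3 : rookInv n a
      = (Finset.univ.filter (fun p : Fin n × Fin n =>
          p.1 < p.2 ∧ 0 < a p.1 ∧ a p.2 = 0)).card
        + (Finset.univ.filter (fun p : Fin n × Fin n =>
          p.1 < p.2 ∧ 0 < a p.2 ∧ a p.2 < a p.1)).card := by
    rw [rookInv,
      card_filter_split (fun p : Fin n × Fin n => p.1 < p.2 ∧ a p.2 < a p.1)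
        (fun p => a p.2 = 0)]
    congr 1
    · exact fcard_congr _ _ _ (fun x =>
        ⟨fun ⟨⟨h1, h2⟩, h3⟩ => ⟨h1, by omega, h3⟩,
         fun ⟨h1, h2, h3⟩ => ⟨⟨h1, by omega⟩, h3⟩⟩)
    · exact fcard_congr _ _ _ (fun x =>
        ⟨fun ⟨⟨h1, h2⟩, h3⟩ => ⟨h1, by omega, h2⟩,
         fun ⟨h1, h2, h3⟩ => ⟨⟨h1, h3⟩, by omega⟩⟩)
  -- E4 : B = I0 + B1
  have E4 : (Finset.univ.filter (fun p : Fin n × Fin n =>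
        p.1 < p.2 ∧ 0 < a p.1)).card
      = (Finset.univ.filter (fun p : Fin n × Fin n =>
          p.1 < p.2 ∧ 0 < a p.1 ∧ a p.2 = 0)).card
        + (Finset.univ.filter (fun p : Fin n × Fin n =>
          p.1 < p.2 ∧ 0 < a p.1 ∧ 0 < a p.2)).card := by
    rw [card_filter_split (fun p : Fin n × Fin n => p.1 < p.2 ∧ 0 < a p.1)
        (fun p => a p.2 = 0)]
    congr 1
    · exact fcard_congr _ _ _ (fun x =>
        ⟨fun ⟨⟨h1, h2⟩, h3⟩ => ⟨h1, h2, h3⟩,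
         fun ⟨h1, h2, h3⟩ => ⟨⟨h1, h2⟩, h3⟩⟩)
    · exact fcard_congr _ _ _ (fun x =>
        ⟨fun ⟨⟨h1, h2⟩, h3⟩ => ⟨h1, h2, by omega⟩,
         fun ⟨h1, h2, h3⟩ => ⟨⟨h1, h2⟩, by omega⟩⟩)
  -- E5 : card B as a sum over arcs, in ℤ
  have E5 : (((Finset.univ.filter (fun p : Fin n × Fin n =>
        p.1 < p.2 ∧ 0 < a p.1)).card : ℕ) : ℤ)
      = (k : ℤ) * n - k - ∑ α ∈ A, (α.2.val : ℤ) := by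
    rw [ha, card_B P]
    rw [Nat.cast_sum]
    rw [Finset.sum_congr rfl (fun α hα => show (((n - 1 - α.2.val : ℕ)) : ℤ)
        = (n : ℤ) - 1 - (α.2.val : ℤ) by
      have h1 := harc_ub α hα
      have h2 := harc_lt α hα
      omega)]
    rw [Finset.sum_sub_distrib, Finset.sum_sub_distrib, Finset.sum_const, Finset.sum_const]
    simp only [nsmul_eq_mul, mul_one, ← hA, ← hk]
    try ring
  -- E6 : I1 = sum of arc depths
  have E6 : (Finset.univ.filter (fun p : Fin n × Fin n =>
        p.1 < p.2 ∧ 0 < a p.2 ∧ a p.2 < a p.1)).card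
      = ∑ α ∈ A, depthArc P α := by
    rw [ha, hA]; exact card_inv_nonzero P
  -- E7 : 2 * B1 = k² − k  (in ℤ)
  have hB1eq : (Finset.univ.filter (fun p : Fin n × Fin n =>
        p.1 < p.2 ∧ 0 < a p.1 ∧ 0 < a p.2))
      = ((A.image Prod.snd) ×ˢ (A.image Prod.snd)).filter
          (fun p : Fin n × Fin n => p.1 < p.2) := by
    ext p
    simp only [Finset.mem_filter, Finset.mem_univ, true_and, Finset.mem_product]
    rw [ha, hA]
    rw [← phiRook_pos_iff P, ← phiRook_pos_iff P]
    tauto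
  have hScard : (A.image Prod.snd).card = k := by
    rw [hk]
    exact Finset.card_image_of_injOn (by
      intro x hx y hy hxy
      exact snd_injOn P x hx y hy hxy)
  have E7 : ((Finset.univ.filter (fun p : Fin n × Fin n =>
        p.1 < p.2 ∧ 0 < a p.1 ∧ 0 < a p.2)).card : ℤ)
        + ((Finset.univ.filter (fun p : Fin n × Fin n =>
        p.1 < p.2 ∧ 0 < a p.1 ∧ 0 < a p.2)).card : ℤ)
      = (k : ℤ) * k - k := by
    rw [hB1eq]
    have h2 := two_mul_card_lt_pairs (n := n) (A.image Prod.snd)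
    rw [hScard] at h2
    have hkk : k ≤ k * k := by nlinarith
    rw [← Nat.cast_add, h2, Nat.cast_sub hkk, Nat.cast_mul]
  -- E8 : sum of vertex depths, in ℤ
  have E8 : ((∑ v, depthV P v : ℕ) : ℤ)
      = ∑ α ∈ A, (α.2.val : ℤ) - ∑ α ∈ A, ((α.1.val : ℤ) + 1) := by
    rw [sum_depthV P, Nat.cast_sum, ← hA]
    rw [Finset.sum_congr rfl (fun α hα => show (((α.2.val - α.1.val - 1 : ℕ)) : ℤ)
        = (α.2.val : ℤ) - ((α.1.val : ℤ) + 1) by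
      have := harc_lt α hα
      omega)]
    rw [Finset.sum_sub_distrib]
  -- E9 : the range sum
  have E9 : (∑ i ∈ Finset.range k, ((n : ℤ) - (i + 1)))
        + (∑ i ∈ Finset.range k, ((n : ℤ) - (i + 1)))
      = 2 * (k : ℤ) * n - (k : ℤ) * k - k := by
    have hg : (∑ i ∈ Finset.range k, (i : ℤ)) + (∑ i ∈ Finset.range k, (i : ℤ))
        = (k : ℤ) * k - k := by
      have h1 := Finset.sum_range_id_mul_two k
      have h3 : ∀ m : ℕ, ((m * (m - 1) : ℕ) : ℤ) = (m : ℤ) * m - m := by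
        intro m
        cases m with
        | zero => simp
        | succ t => push_cast [Nat.succ_sub_one]; ring
      calc (∑ i ∈ Finset.range k, (i : ℤ)) + (∑ i ∈ Finset.range k, (i : ℤ))
          = (((∑ i ∈ Finset.range k, i) * 2 : ℕ) : ℤ) := by push_cast; ring
        _ = ((k * (k - 1) : ℕ) : ℤ) := by rw [h1]
        _ = (k : ℤ) * k - k := h3 k
    have hsplit2 : (∑ i ∈ Finset.range k, ((n : ℤ) - (i + 1)))
        = (k : ℤ) * n - k - ∑ i ∈ Finset.range k, (i : ℤ) := by
      rw [Finset.sum_congr rfl (fun i (_ : i ∈ Finset.range k) =>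
        show (n : ℤ) - (i + 1) = ((n : ℤ) - 1) - i by ring)]
      rw [Finset.sum_sub_distrib, Finset.sum_const, Finset.card_range, nsmul_eq_mul]
      ring
    rw [hsplit2]
    linarith
  -- assemble
  rw [rookLen, tIdx, ← hA, ← hk]
  push_cast [E3]
  rw [E6]
  have := E4
  have hfin : ((∑ j, a j : ℕ) : ℤ)
      + (((Finset.univ.filter (fun p : Fin n × Fin n =>
          p.1 < p.2 ∧ 0 < a p.1 ∧ a p.2 = 0)).card : ℕ) : ℤ)
      + ((∑ α ∈ A, depthArc P α : ℕ) : ℤ)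
      = (∑ i ∈ Finset.range k, ((n : ℤ) - (i + 1)))
        - ((∑ v, depthV P v : ℕ) : ℤ)
        + ((∑ α ∈ A, depthArc P α : ℕ) : ℤ) := by
    have hE4' : (((Finset.univ.filter (fun p : Fin n × Fin n =>
          p.1 < p.2 ∧ 0 < a p.1 ∧ a p.2 = 0)).card : ℕ) : ℤ)
        + (((Finset.univ.filter (fun p : Fin n × Fin n =>
          p.1 < p.2 ∧ 0 < a p.1 ∧ 0 < a p.2)).card : ℕ) : ℤ)
        = (((Finset.univ.filter (fun p : Fin n × Fin n =>
          p.1 < p.2 ∧ 0 < a p.1)).card : ℕ) : ℤ) := by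
      rw [E4]; push_cast; ring
    linarith [E2, E5, E7, E8, E9, hE4']
  push_cast at hfin ⊢
  linarith [hfin]
end

section
/- The map φ is a bijection from the set of all set partitions of {1,…,n} onto the set of strictly upper triangular n-rooks; moreover, a set partition A has exactly b blocks if and only if the n-rook φ(A) has rank n − b. -/
open scoped Classical

namespace Stmt5Aux

def rookRoot {n : ℕ} (a : Fin n → ℕ) (j : Fin n) : Fin n :=
  if h : a j ≠ 0 ∧ a j ≤ j.val then
    rookRoot a ⟨a j - 1, by have := j.isLt; omega⟩
  else j
termination_by j.val
decreasing_by omega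

theorem rookRoot_pos {n : ℕ} {a : Fin n → ℕ} {j : Fin n} (h1 : a j ≠ 0) (h2 : a j ≤ j.val) :
    rookRoot a j = rookRoot a ⟨a j - 1, by have := j.isLt; omega⟩ := by
  rw [rookRoot.eq_def (j := j)]
  rw [dif_pos ⟨h1, h2⟩]

theorem rookRoot_zero {n : ℕ} {a : Fin n → ℕ} {j : Fin n} (h : ¬(a j ≠ 0 ∧ a j ≤ j.val)) :
    rookRoot a j = j := by
  rw [rookRoot.eq_def (j := j)]
  rw [dif_neg h]

theorem rookRoot_le {n : ℕ} (a : Fin n → ℕ) (j : Fin n) : (rookRoot a j).val ≤ j.val := by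
  by_cases h : a j ≠ 0 ∧ a j ≤ j.val
  · rw [rookRoot_pos h.1 h.2]
    refine le_trans (rookRoot_le a _) ?_
    simp only [Fin.val_mk]
    omega
  · rw [rookRoot_zero h]
termination_by j.val
decreasing_by omega

theorem a_rookRoot {n : ℕ} {a : Fin n → ℕ} (Ha : ∀ i, a i ≤ i.val) (j : Fin n) :
    a (rookRoot a j) = 0 := by
  by_cases h : a j ≠ 0 ∧ a j ≤ j.val
  · rw [rookRoot_pos h.1 h.2]
    exact a_rookRoot Ha _
  · have hz : a j = 0 := by
      by_contra hc
      exact h ⟨hc, Ha j⟩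
    rw [rookRoot_zero h]
    exact hz
termination_by j.val
decreasing_by omega

theorem rookRoot_idem {n : ℕ} {a : Fin n → ℕ} (Ha : ∀ i, a i ≤ i.val) (j : Fin n) :
    rookRoot a (rookRoot a j) = rookRoot a j :=
  rookRoot_zero (by simp [a_rookRoot Ha j])

end Stmt5Aux

namespace Stmt5Aux


def gpred {n : ℕ} (a : Fin n → ℕ) (z : Fin n) : Fin n :=
  if h : a z ≠ 0 ∧ a z ≤ z.val then ⟨a z - 1, by have := z.isLt; omega⟩ else z

theorem gpred_val {n : ℕ} {a : Fin n → ℕ} {z : Fin n} (h1 : a z ≠ 0) (h2 : a z ≤ z.val) :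
    (gpred a z).val = a z - 1 := by
  rw [gpred, dif_pos ⟨h1, h2⟩]

theorem rookRoot_gpred {n : ℕ} {a : Fin n → ℕ} {z : Fin n} (h1 : a z ≠ 0) (h2 : a z ≤ z.val) :
    rookRoot a (gpred a z) = rookRoot a z := by
  rw [gpred, dif_pos ⟨h1, h2⟩, rookRoot_pos h1 h2]

theorem keyLemma {n : ℕ} {a : Fin n → ℕ} (Ha : ∀ i, a i ≤ i.val)
    (Hinj : ∀ i j, a i ≠ 0 → a i = a j → i = j)
    {x y : Fin n} (hy : a y ≠ 0) (hroot : rookRoot a x = rookRoot a y)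
    (h1 : a y - 1 < x.val) (h2 : x < y) : False := by
  set r := rookRoot a y with hr
  have hyle := Ha y
  have hgy : (gpred a y).val = a y - 1 := gpred_val hy hyle
  have hgyr : rookRoot a (gpred a y) = r := by rw [rookRoot_gpred hy hyle]
  have hrval : r.val < x.val := by
    have := rookRoot_le a (gpred a y)
    rw [hgyr] at this
    omega
  set C : Finset (Fin n) := Finset.univ.filter (fun z => rookRoot a z = r ∧ z.val ≤ x.val)
    with hC
  have hxC : x ∈ C := by simp [hC, hroot, hr]
  have hrC : r ∈ C := by
    simp only [hC, Finset.mem_filter, Finset.mem_univ, true_and]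
    exact ⟨rookRoot_idem Ha y, le_of_lt hrval⟩
  have hmemS : ∀ z ∈ C.erase r, a z ≠ 0 ∧ a z ≤ z.val ∧ rookRoot a z = r ∧ z.val ≤ x.val := by
    intro z hz
    obtain ⟨hzr, hzC⟩ := Finset.mem_erase.mp hz
    simp only [hC, Finset.mem_filter, Finset.mem_univ, true_and] at hzC
    refine ⟨?_, Ha z, hzC.1, hzC.2⟩
    intro h0
    exact hzr (by rw [← hzC.1, rookRoot_zero (by simp [h0])])
  have hmapsto : ∀ z (hz : z ∈ C.erase r), gpred a z ∈ C.erase x := by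
    intro z hz
    obtain ⟨h0, hle, hrt, hxle⟩ := hmemS z hz
    have hv : (gpred a z).val = a z - 1 := gpred_val h0 hle
    have hlt : (gpred a z).val < x.val := by omega
    refine Finset.mem_erase.mpr ⟨?_, ?_⟩
    · intro heq; rw [heq] at hlt; omega
    · simp only [hC, Finset.mem_filter, Finset.mem_univ, true_and]
      exact ⟨by rw [rookRoot_gpred h0 hle, hrt], le_of_lt hlt⟩
  have hinj : ∀ z₁ z₂ (h₁ : z₁ ∈ C.erase r) (h₂ : z₂ ∈ C.erase r),
      gpred a z₁ = gpred a z₂ → z₁ = z₂ := by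
    intro z₁ z₂ h₁ h₂ heq
    obtain ⟨h01, hle1, -, -⟩ := hmemS z₁ h₁
    obtain ⟨h02, hle2, -, -⟩ := hmemS z₂ h₂
    have := congrArg Fin.val heq
    rw [gpred_val h01 hle1, gpred_val h02 hle2] at this
    exact Hinj z₁ z₂ h01 (by omega)
  have hcard : (C.erase x).card ≤ (C.erase r).card := by
    rw [Finset.card_erase_of_mem hxC, Finset.card_erase_of_mem hrC]
  have hgyD : gpred a y ∈ C.erase x := by
    refine Finset.mem_erase.mpr ⟨?_, ?_⟩
    · intro heq
      have := congrArg Fin.val heq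
      omega
    · simp only [hC, Finset.mem_filter, Finset.mem_univ, true_and]
      exact ⟨hgyr, by omega⟩
  obtain ⟨z, hzS, hzeq⟩ := Finset.surj_on_of_inj_on_of_card_le
    (fun z _ => gpred a z) hmapsto hinj hcard (gpred a y) hgyD
  obtain ⟨h0, hle, -, hxle⟩ := hmemS z hzS
  have := congrArg Fin.val hzeq
  rw [gpred_val h0 hle] at this
  have hzy : z = y := Hinj z y h0 (by omega)
  rw [hzy] at hxle
  have := h2
  omega

end Stmt5Aux


namespace Stmt5Aux

variable {n : ℕ} {P : Finpartition (Finset.univ : Finset (Fin n))} {i j k : Fin n}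

theorem min'_congr {s t : Finset (Fin n)} (h : s = t) (hs : s.Nonempty) (ht : t.Nonempty) :
    s.min' hs = t.min' ht := by subst h; rfl

theorem arc_part_eq (h : IsArc P i j) : P.part i = P.part j ∧ i ∈ P.part j := by
  obtain ⟨hij, b, hb, hib, hjb, -⟩ := h
  have h1 : P.part j = b := P.part_eq_of_mem hb hjb
  have h2 : P.part i = b := P.part_eq_of_mem hb hib
  rw [h1, h2]
  exact ⟨rfl, hib⟩

theorem arc_unique_right (h : IsArc P i j) (h' : IsArc P k j) : i = k := by
  obtain ⟨hij, b, hb, hib, hjb, hbet⟩ := h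
  obtain ⟨hkj, b', hb', hkb', hjb', hbet'⟩ := h'
  have hbb : b = b' := P.eq_of_mem_parts hb hb' hjb hjb'
  subst hbb
  rcases lt_trichotomy i k with hc | hc | hc
  · exact absurd ⟨hc, hkj⟩ (hbet k hkb')
  · exact hc
  · exact absurd ⟨hc, hij⟩ (hbet' i hib)

theorem arc_unique_left (h : IsArc P i j) (h' : IsArc P i k) : j = k := by
  obtain ⟨hij, b, hb, hib, hjb, hbet⟩ := h
  obtain ⟨hik, b', hb', hib', hkb', hbet'⟩ := h'
  have hbb : b = b' := P.eq_of_mem_parts hb hb' hib hib'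
  subst hbb
  rcases lt_trichotomy j k with hc | hc | hc
  · exact absurd ⟨hij, hc⟩ (hbet' j hjb)
  · exact hc
  · exact absurd ⟨hik, hc⟩ (hbet k hkb')

theorem phiRook_eq_of_arc (h : IsArc P i j) : phiRook P j = i.val + 1 := by
  unfold phiRook
  rw [Finset.sum_eq_single_of_mem i (Finset.mem_univ i)
    (fun b _ hb => if_neg (fun harc => hb (arc_unique_right harc h)))]
  rw [if_pos h]

theorem exists_arc_of_ne_zero (h : phiRook P j ≠ 0) : ∃ i, IsArc P i j := by
  by_contra hc
  push_neg at hc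
  exact h (Finset.sum_eq_zero (fun i _ => if_neg (hc i)))

theorem exists_arc_of_lt_mem (hk : k ∈ P.part j) (hkj : k < j) : ∃ i, IsArc P i j := by
  classical
  set S : Finset (Fin n) := (P.part j).filter (fun z => z < j) with hS
  have hSne : S.Nonempty := ⟨k, by simp [hS, hk, hkj]⟩
  set i := S.max' hSne with hi
  have hiS : i ∈ S := S.max'_mem hSne
  simp only [hS, Finset.mem_filter] at hiS
  refine ⟨i, hiS.2, P.part j, P.part_mem.mpr (Finset.mem_univ j), hiS.1,
    P.mem_part (Finset.mem_univ j), ?_⟩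
  intro z hz hcon
  have hzS : z ∈ S := by simp [hS, hz, hcon.2]
  exact absurd (S.le_max' z hzS) (not_le.mpr hcon.1)

theorem phiRook_le (j : Fin n) : phiRook P j ≤ j.val := by
  by_cases h : phiRook P j = 0
  · omega
  · obtain ⟨i, harc⟩ := exists_arc_of_ne_zero h
    rw [phiRook_eq_of_arc harc]
    exact harc.1

theorem phiRook_ne_zero_of_lt_mem (hk : k ∈ P.part j) (hkj : k < j) : phiRook P j ≠ 0 := by
  obtain ⟨i, harc⟩ := exists_arc_of_lt_mem hk hkj
  rw [phiRook_eq_of_arc harc]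
  omega

theorem rookRoot_phiRook (j : Fin n) :
    rookRoot (phiRook P) j = (P.part j).min' ⟨j, P.mem_part (Finset.mem_univ j)⟩ := by
  by_cases h : phiRook P j = 0
  · rw [rookRoot_zero (by simp [h])]
    have hne : (P.part j).Nonempty := ⟨j, P.mem_part (Finset.mem_univ j)⟩
    have h1 : (P.part j).min' hne ≤ j := Finset.min'_le _ _ (P.mem_part (Finset.mem_univ j))
    rcases eq_or_lt_of_le h1 with he | hlt
    · exact he.symm
    · exact absurd h (phiRook_ne_zero_of_lt_mem (Finset.min'_mem _ hne) hlt)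
  · obtain ⟨i, harc⟩ := exists_arc_of_ne_zero h
    have hval : phiRook P j = i.val + 1 := phiRook_eq_of_arc harc
    have hij : i < j := harc.1
    have hle : phiRook P j ≤ j.val := phiRook_le j
    rw [rookRoot_pos h hle]
    have heq : (⟨phiRook P j - 1, by have := j.isLt; omega⟩ : Fin n) = i := by
      apply Fin.ext
      simp [hval]
    rw [heq, rookRoot_phiRook i]
    exact min'_congr (arc_part_eq harc).1 _ _
termination_by j.val
decreasing_by exact hij

theorem part_eq_iff (x y : Fin n) :
    P.part x = P.part y ↔ rookRoot (phiRook P) x = rookRoot (phiRook P) y := by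
  constructor
  · intro h
    rw [rookRoot_phiRook, rookRoot_phiRook]
    exact min'_congr h _ _
  · intro h
    rw [rookRoot_phiRook, rookRoot_phiRook] at h
    have h1 : (P.part x).min' ⟨x, P.mem_part (Finset.mem_univ x)⟩ ∈ P.part x :=
      Finset.min'_mem _ _
    have h2 : (P.part y).min' ⟨y, P.mem_part (Finset.mem_univ y)⟩ ∈ P.part y :=
      Finset.min'_mem _ _
    rw [h] at h1
    exact (P.part_eq_of_mem (P.part_mem.mpr (Finset.mem_univ x)) h1).symm.trans
      (P.part_eq_of_mem (P.part_mem.mpr (Finset.mem_univ y)) h2)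

end Stmt5Aux

namespace Stmt5Aux

variable {n : ℕ} {P Q : Finpartition (Finset.univ : Finset (Fin n))}

theorem mem_part_iff_root (x y : Fin n) :
    y ∈ P.part x ↔ rookRoot (phiRook P) y = rookRoot (phiRook P) x := by
  constructor
  · intro hy
    exact (part_eq_iff y x).mp (P.part_eq_of_mem (P.part_mem.mpr (Finset.mem_univ x)) hy)
  · intro hr
    have h3 := (part_eq_iff y x).mpr hr
    rw [← h3]
    exact P.mem_part (Finset.mem_univ y)

theorem part_eq_of_phi_eq (h : phiRook P = phiRook Q) (x : Fin n) : P.part x = Q.part x := by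
  ext y
  rw [mem_part_iff_root, h, ← mem_part_iff_root]

theorem parts_sub (hpart : ∀ x : Fin n, P.part x = Q.part x) : P.parts ⊆ Q.parts := by
  intro b hb
  obtain ⟨x, hx⟩ := P.nonempty_of_mem_parts hb
  have hbx : b = P.part x := (P.part_eq_of_mem hb hx).symm
  rw [hbx, hpart x]
  exact Q.part_mem.mpr (Finset.mem_univ x)

theorem rank_add_card (P : Finpartition (Finset.univ : Finset (Fin n))) :
    rookRank n (phiRook P) + P.parts.card = n := by
  classical
  have hsplit := Finset.card_filter_add_card_filter_not
    (s := (Finset.univ : Finset (Fin n))) (p := fun j => phiRook P j ≠ 0)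
  have hcards : (Finset.univ.filter (fun j => ¬ phiRook P j ≠ 0)).card = P.parts.card := by
    apply Finset.card_bij (fun j _ => P.part j)
    · intro j _
      exact P.part_mem.mpr (Finset.mem_univ j)
    · intro j hj j' hj' heq
      simp only [Finset.mem_filter, Finset.mem_univ, true_and, not_not] at hj hj'
      have h1 : rookRoot (phiRook P) j = j := rookRoot_zero (by simp [hj])
      have h1' : rookRoot (phiRook P) j' = j' := rookRoot_zero (by simp [hj'])
      have h2 := rookRoot_phiRook (P := P) j
      have h2' := rookRoot_phiRook (P := P) j'
      rw [h1] at h2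
      rw [h1'] at h2'
      rw [h2, h2']
      exact min'_congr heq _ _
    · intro b hb
      have hbne : b.Nonempty := P.nonempty_of_mem_parts hb
      set j := b.min' hbne with hjdef
      have hjb : j ∈ b := b.min'_mem hbne
      have hpart : P.part j = b := P.part_eq_of_mem hb hjb
      have hz : phiRook P j = 0 := by
        by_contra hc
        obtain ⟨i, harc⟩ := exists_arc_of_ne_zero hc
        have hib : i ∈ P.part j := (arc_part_eq harc).2
        rw [hpart] at hib
        exact absurd (b.min'_le i hib) (not_le.mpr harc.1)
      exact ⟨j, by simp [hz], hpart⟩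
  rw [← hcards]
  rw [Finset.card_univ, Fintype.card_fin] at hsplit
  exact hsplit

end Stmt5Aux


open Stmt5Aux

/-- `φ` is a bijection from the set partitions of `{1,…,n}` onto
the strictly upper triangular `n`-rooks (those with `a(i) < i` for all `i`,
i.e. `a i < i + 1` in 0-based positions), and `A` has exactly `b` blocks iff
`φ(A)` has rank `n − b`. -/
theorem stmt5 (n : ℕ) :
    (∀ P : Finpartition (Finset.univ : Finset (Fin n)),
        IsRook n (phiRook P) ∧ ∀ i : Fin n, phiRook P i < i.val + 1) ∧
    (∀ P Q : Finpartition (Finset.univ : Finset (Fin n)),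
        phiRook P = phiRook Q → P = Q) ∧
    (∀ a : Fin n → ℕ, IsRook n a → (∀ i : Fin n, a i < i.val + 1) →
        ∃ P : Finpartition (Finset.univ : Finset (Fin n)), phiRook P = a) ∧
    (∀ P : Finpartition (Finset.univ : Finset (Fin n)), ∀ b : ℕ, b ≤ n →
        (P.parts.card = b ↔ rookRank n (phiRook P) = n - b)) := by
  refine ⟨?_, ?_, ?_, ?_⟩
  · -- well-definedness
    intro P
    refine ⟨⟨?_, ?_⟩, ?_⟩
    · intro j
      have h1 := phiRook_le (P := P) j
      have h2 := j.isLt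
      omega
    · intro i j hi hij
      obtain ⟨k, harc⟩ := exists_arc_of_ne_zero hi
      have hvi : phiRook P i = k.val + 1 := phiRook_eq_of_arc harc
      have hj : phiRook P j ≠ 0 := by rw [← hij]; exact hi
      obtain ⟨k', harc'⟩ := exists_arc_of_ne_zero hj
      have hvj : phiRook P j = k'.val + 1 := phiRook_eq_of_arc harc'
      have hkk : k = k' := by
        apply Fin.ext
        rw [hvi, hvj] at hij
        omega
      exact arc_unique_left harc (hkk ▸ harc')
    · intro j
      have := phiRook_le (P := P) j
      omega
  · -- injectivity
    intro P Q h
    apply Finpartition.ext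
    apply Finset.Subset.antisymm
    · exact parts_sub (part_eq_of_phi_eq h)
    · exact parts_sub (fun x => (part_eq_of_phi_eq h x).symm)
  · -- surjectivity
    intro a hrook htri
    have Ha : ∀ i : Fin n, a i ≤ i.val := fun i => by have := htri i; omega
    have Hinj := hrook.2
    set s : Setoid (Fin n) :=
      ⟨fun x y => rookRoot a x = rookRoot a y, ⟨fun _ => rfl, Eq.symm, Eq.trans⟩⟩ with hs
    set P := Finpartition.ofSetoid s with hP
    have hmem : ∀ x y : Fin n, y ∈ P.part x ↔ rookRoot a x = rookRoot a y := by
      intro x y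
      exact Finpartition.mem_part_ofSetoid_iff_rel
    refine ⟨P, funext fun j => ?_⟩
    by_cases hj : a j = 0
    · have hnoarc : ∀ i, ¬ IsArc P i j := by
        rintro i ⟨hij, b, hb, hib, hjb, -⟩
        have hpi : P.part i = b := P.part_eq_of_mem hb hib
        have : j ∈ P.part i := by rw [hpi]; exact hjb
        have hrel : rookRoot a i = rookRoot a j := (hmem i j).mp this
        have hrj : rookRoot a j = j := rookRoot_zero (by simp [hj])
        have := rookRoot_le a i
        rw [hrj] at hrel
        have : i.val < j.val := hij
        omega
      show phiRook P j = a j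
      rw [hj]
      exact Finset.sum_eq_zero (fun i _ => if_neg (hnoarc i))
    · have hjpos : j.val ≠ 0 := by have := Ha j; omega
      set i : Fin n := ⟨a j - 1, by have := j.isLt; have := Ha j; omega⟩ with hi
      have hij : i < j := by
        show i.val < j.val
        have := Ha j
        simp only [hi]
        omega
      have hroots : rookRoot a j = rookRoot a i := rookRoot_pos hj (Ha j)
      have harc : IsArc P i j := by
        refine ⟨hij, P.part j, P.part_mem.mpr (Finset.mem_univ j), ?_,
          P.mem_part (Finset.mem_univ j), ?_⟩
        · exact (hmem j i).mpr hroots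
        · rintro z hz ⟨h1z, hz2⟩
          have hrel : rookRoot a j = rookRoot a z := (hmem j z).mp hz
          have h1z' : a j - 1 < z.val := h1z
          exact keyLemma Ha Hinj hj hrel.symm h1z' hz2
      have := phiRook_eq_of_arc harc
      rw [this]
      show a j - 1 + 1 = a j
      omega
  · -- rank
    intro P b hb
    have hkey := rank_add_card P
    have hle : P.parts.card ≤ n := by
      have := P.card_parts_le_card
      simpa using this
    omega
end

section
/- Fix 0 ≤ k ≤ n and let e₀ be the n-rook with e₀(i) = 0 for 1 ≤ i ≤ n−k and e₀(n−k+j) = j for 1 ≤ j ≤ k. Then e₀ belongs to P_{n,k} and e₀ ≤ x in the Bruhat–Chevalley–Renner order for every x ∈ P_{n,k}; that is, e₀ is the unique minimum of the poset P_{n,k}. -/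
open scoped Classical

/-- The generating relations of the Bruhat–Chevalley–Renner order on `n`-rooks. -/
def BCRStep (n : ℕ) (a b : Fin n → ℕ) : Prop :=
  IsRook n a ∧ IsRook n b ∧
  ((∃ i, a i < b i ∧ ∀ j, j ≠ i → a j = b j) ∨
   (∃ i j : Fin n, i < j ∧ b i = a j ∧ b j = a i ∧ b j < b i ∧
      ∀ m, m ≠ i → m ≠ j → a m = b m))

/-- The Bruhat–Chevalley–Renner order: the partial order on `n`-rooks generated by
the relations `BCRStep`. -/
def BCRle (n : ℕ) : (Fin n → ℕ) → (Fin n → ℕ) → Prop :=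
  Relation.ReflTransGen (BCRStep n)

lemma rookInv_eq_zero_of_mono {n : ℕ} (x : Fin n → ℕ)
    (h : ∀ a b : Fin n, a ≤ b → x a ≤ x b) : rookInv n x = 0 := by
  unfold rookInv
  rw [Finset.card_eq_zero, Finset.filter_eq_empty_iff]
  rintro ⟨a, b⟩ - ⟨hab, hba⟩
  exact absurd (h a b hab.le) (not_le.mpr hba)

lemma mono_of_adj {n : ℕ} (x : Fin n → ℕ)
    (h : ∀ i : Fin n, ∀ hi : (i : ℕ) + 1 < n, x i ≤ x ⟨(i : ℕ) + 1, hi⟩) :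
    ∀ a b : Fin n, a ≤ b → x a ≤ x b := by
  have key : ∀ d : ℕ, ∀ a b : Fin n, (b : ℕ) = (a : ℕ) + d → x a ≤ x b := by
    intro d
    induction d with
    | zero =>
      intro a b hab
      have hab' : a = b := Fin.ext (by omega)
      rw [hab']
    | succ d ih =>
      intro a b hab
      have hc : (a : ℕ) + d < n := by have := b.isLt; omega
      have hlt : (a : ℕ) + d + 1 < n := by have := b.isLt; omega
      have h1 : x a ≤ x ⟨(a : ℕ) + d, hc⟩ := ih a _ rfl
      have h2 := h ⟨(a : ℕ) + d, hc⟩ (by simpa using hlt)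
      have hb : b = ⟨(a : ℕ) + d + 1, hlt⟩ := Fin.ext (by show (b : ℕ) = (a : ℕ) + d + 1; omega)
      rw [hb]
      exact le_trans h1 h2
  intro a b hab
  exact key ((b : ℕ) - (a : ℕ)) a b (by have : (a:ℕ) ≤ b := hab; omega)

lemma swap_move {n : ℕ} (x : Fin n → ℕ) (hx : IsRook n x)
    (hut : ∀ m : Fin n, x m ≤ (m : ℕ) + 1)
    (i j : Fin n) (hadj : (j : ℕ) = (i : ℕ) + 1) (hdesc : x j < x i) :
    ∃ y : Fin n → ℕ, BCRStep n y x ∧ IsRook n y ∧ (∀ m : Fin n, y m ≤ (m : ℕ) + 1) ∧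
      rookRank n y = rookRank n x ∧ rookLen n y < rookLen n x := by
  have hij : i < j := by rw [Fin.lt_def]; omega
  set σ : Equiv.Perm (Fin n) := Equiv.swap i j with hσdef
  have hσi : σ i = j := Equiv.swap_apply_left i j
  have hσj : σ j = i := Equiv.swap_apply_right i j
  have hσm : ∀ m : Fin n, m ≠ i → m ≠ j → σ m = m :=
    fun m h1 h2 => Equiv.swap_apply_of_ne_of_ne h1 h2
  set y : Fin n → ℕ := fun m => x (σ m) with hy
  have hyi : y i = x j := by simp only [hy, hσi]
  have hyj : y j = x i := by simp only [hy, hσj]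
  have hym : ∀ m, m ≠ i → m ≠ j → y m = x m := fun m h1 h2 => by
    simp only [hy, hσm m h1 h2]
  have hrooky : IsRook n y := by
    refine ⟨fun m => hx.1 _, fun a b ha hab => σ.injective (hx.2 (σ a) (σ b) ha hab)⟩
  have hvσ : ∀ m : Fin n, ((σ m : Fin n) : ℕ) =
      if (m : ℕ) = (i : ℕ) then (j : ℕ) else if (m : ℕ) = (j : ℕ) then (i : ℕ) else (m : ℕ) := by
    intro m
    rcases eq_or_ne m i with rfl | h1
    · simp [hσi]
    · rcases eq_or_ne m j with rfl | h2
      · rw [hσj, if_neg (fun hc => h1 (Fin.ext hc)), if_pos rfl]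
      · rw [hσm m h1 h2, if_neg (fun hc => h1 (Fin.ext hc)), if_neg (fun hc => h2 (Fin.ext hc))]
  refine ⟨y, ⟨hrooky, hx, Or.inr ⟨i, j, hij, hyj.symm, hyi.symm, hdesc,
      fun m h1 h2 => hym m h1 h2⟩⟩, hrooky, ?_, ?_, ?_⟩
  · intro m
    rcases eq_or_ne m i with rfl | h1
    · rw [hyi]; have := hut m; omega
    · rcases eq_or_ne m j with rfl | h2
      · rw [hyj]; have := hut i; omega
      · rw [hym m h1 h2]; exact hut m
  · unfold rookRank
    apply Finset.card_equiv σ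
    intro m
    simp only [Finset.mem_filter, Finset.mem_univ, true_and, hy]
  · unfold rookLen
    have hsum : (∑ m, y m) = ∑ m, x m := Equiv.sum_comp σ x
    rw [hsum]
    have hmem : ((i, j) : Fin n × Fin n) ∈ Finset.univ.filter
        (fun p : Fin n × Fin n => p.1 < p.2 ∧ x p.2 < x p.1) := by
      simp only [Finset.mem_filter, Finset.mem_univ, true_and]
      exact ⟨hij, hdesc⟩
    have hle : rookInv n y ≤ ((Finset.univ.filter
        (fun p : Fin n × Fin n => p.1 < p.2 ∧ x p.2 < x p.1)).erase ((i, j) : Fin n × Fin n)).card := by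
      unfold rookInv
      apply Finset.card_le_card_of_injOn (fun p => (σ p.1, σ p.2))
      · rintro ⟨a, b⟩ hp
        simp only [Finset.mem_coe, Finset.mem_filter, Finset.mem_univ, true_and] at hp
        obtain ⟨hab, hba⟩ := hp
        have hba' : x (σ b) < x (σ a) := hba
        have hnotij : ¬((a : ℕ) = (i : ℕ) ∧ (b : ℕ) = (j : ℕ)) := by
          rintro ⟨h1, h2⟩
          have ha : a = i := Fin.ext h1
          have hb : b = j := Fin.ext h2
          rw [ha, hb, hσi, hσj] at hba'
          omega
        have hord : σ a < σ b := by
          rw [Fin.lt_def, hvσ a, hvσ b]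
          have hab' : (a : ℕ) < (b : ℕ) := hab
          have hadj' : (j : ℕ) = (i : ℕ) + 1 := hadj
          have hbn : (b : ℕ) < n := b.isLt
          split_ifs <;> omega
        refine Finset.mem_erase.mpr ⟨?_, ?_⟩
        · intro hc
          have h1 : σ a = i := congrArg Prod.fst hc
          have h2 : σ b = j := congrArg Prod.snd hc
          have ha : a = j := by
            have := congrArg σ h1
            rwa [Equiv.swap_apply_self, hσi] at this
          have hb : b = i := by
            have := congrArg σ h2
            rwa [Equiv.swap_apply_self, hσj] at this
          rw [ha, hb] at hab
          exact absurd hab (not_lt.mpr hij.le)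
        · simp only [Finset.mem_filter, Finset.mem_univ, true_and]
          exact ⟨hord, hba'⟩
      · rintro ⟨a, b⟩ - ⟨c, d⟩ - h
        simp only [Prod.mk.injEq] at h
        exact Prod.ext (σ.injective h.1) (σ.injective h.2)
    have hlt := Finset.card_erase_lt_of_mem hmem
    have : rookInv n x = (Finset.univ.filter
        (fun p : Fin n × Fin n => p.1 < p.2 ∧ x p.2 < x p.1)).card := rfl
    omega

lemma mono_lower {n k : ℕ} (hk : k ≤ n) (x : Fin n → ℕ) (hx : IsRook n x)
    (hmono : ∀ a b : Fin n, a ≤ b → x a ≤ x b) (hr : rookRank n x = k)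
    (p : Fin n) :
    (if (p : ℕ) + 1 ≤ n - k then 0 else (p : ℕ) + 1 - (n - k)) ≤ x p := by
  by_contra hcon
  push_neg at hcon
  have hp1 : ¬ ((p : ℕ) + 1 ≤ n - k) := by
    intro h; rw [if_pos h] at hcon; omega
  rw [if_neg hp1] at hcon
  have hA : (Finset.univ.filter (fun m : Fin n => m ≤ p ∧ x m ≠ 0)).card ≤ x p := by
    have hmaps : ∀ m ∈ Finset.univ.filter (fun m : Fin n => m ≤ p ∧ x m ≠ 0),
        x m ∈ Finset.Icc 1 (x p) := by
      intro m hm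
      simp only [Finset.mem_filter, Finset.mem_univ, true_and] at hm
      exact Finset.mem_Icc.mpr ⟨Nat.one_le_iff_ne_zero.mpr hm.2, hmono m p hm.1⟩
    have hinj : Set.InjOn x (Finset.univ.filter (fun m : Fin n => m ≤ p ∧ x m ≠ 0)) := by
      intro a ha b hb hab
      simp only [Finset.coe_filter, Finset.mem_univ, true_and, Set.mem_setOf_eq] at ha hb
      exact hx.2 a b ha.2 hab
    calc (Finset.univ.filter (fun m : Fin n => m ≤ p ∧ x m ≠ 0)).card
        ≤ (Finset.Icc 1 (x p)).card := Finset.card_le_card_of_injOn x hmaps hinj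
      _ = x p := by rw [Nat.card_Icc]; omega
  have hB : (Finset.univ.filter (fun m : Fin n => p < m ∧ x m ≠ 0)).card ≤ n - 1 - (p : ℕ) := by
    calc (Finset.univ.filter (fun m : Fin n => p < m ∧ x m ≠ 0)).card
        ≤ (Finset.Ioi p).card := by
          apply Finset.card_le_card
          intro m hm
          simp only [Finset.mem_filter, Finset.mem_univ, true_and] at hm
          exact Finset.mem_Ioi.mpr hm.1
      _ = n - 1 - (p : ℕ) := Fin.card_Ioi p
  have hsplit : k ≤ (Finset.univ.filter (fun m : Fin n => m ≤ p ∧ x m ≠ 0)).card +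
      (Finset.univ.filter (fun m : Fin n => p < m ∧ x m ≠ 0)).card := by
    rw [← hr]
    unfold rookRank
    refine le_trans (Finset.card_le_card ?_) (Finset.card_union_le _ _)
    intro m hm
    simp only [Finset.mem_filter, Finset.mem_univ, true_and] at hm
    rcases le_or_gt m p with h | h
    · exact Finset.mem_union_left _ (by simp only [Finset.mem_filter, Finset.mem_univ, true_and]; exact ⟨h, hm⟩)
    · exact Finset.mem_union_right _ (by simp only [Finset.mem_filter, Finset.mem_univ, true_and]; exact ⟨h, hm⟩)
  have hpn : (p : ℕ) < n := p.isLt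
  omega

/-- the rook `e₀` with `e₀(i) = 0` for `1 ≤ i ≤ n−k` and
`e₀(n−k+j) = j` for `1 ≤ j ≤ k` belongs to `P_{n,k}` (the upper triangular
`n`-rooks of rank `k`) and is below every element of `P_{n,k}` in the
Bruhat–Chevalley–Renner order; it is the unique minimum of `P_{n,k}`. -/
theorem stmt6 (n k : ℕ) (hk : k ≤ n) :
    let e0 : Fin n → ℕ := fun i => if i.val + 1 ≤ n - k then 0 else i.val + 1 - (n - k)
    (IsRook n e0 ∧ (∀ i : Fin n, e0 i ≤ i.val + 1) ∧ rookRank n e0 = k) ∧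
    ∀ x : Fin n → ℕ, IsRook n x → (∀ i : Fin n, x i ≤ i.val + 1) →
      rookRank n x = k → BCRle n e0 x := by
  intro e0
  have he0 : ∀ i : Fin n, e0 i = if (i : ℕ) + 1 ≤ n - k then 0 else (i : ℕ) + 1 - (n - k) :=
    fun i => rfl
  have he0ut : ∀ i : Fin n, e0 i ≤ (i : ℕ) + 1 := by
    intro i; rw [he0]; split_ifs <;> omega
  have he0rook : IsRook n e0 := by
    constructor
    · intro i; rw [he0]; have := i.isLt; split_ifs <;> omega
    · intro a b ha hab
      rw [he0] at ha hab
      rw [he0 b] at hab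
      apply Fin.ext
      by_cases h1 : (a : ℕ) + 1 ≤ n - k
      · rw [if_pos h1] at ha; exact absurd rfl ha
      · rw [if_neg h1] at ha hab
        by_cases h2 : (b : ℕ) + 1 ≤ n - k
        · rw [if_pos h2] at hab; omega
        · rw [if_neg h2] at hab; omega
  have he0rank : rookRank n e0 = k := by
    unfold rookRank
    have hfe : Finset.univ.filter (fun i : Fin n => e0 i ≠ 0)
        = Finset.univ.filter (fun i : Fin n => n - k ≤ (i : ℕ)) := by
      apply Finset.filter_congr
      rintro i -
      rw [he0]
      split_ifs with h
      · simp only [ne_eq, not_true_eq_false, false_iff]  -- 0 ≠ 0 false ↔ ...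
        omega
      · simp only [ne_eq]
        omega
    rw [hfe]
    rcases Nat.eq_zero_or_pos k with rfl | hkpos
    · rw [Finset.card_eq_zero, Finset.filter_eq_empty_iff]
      rintro i -
      have := i.isLt
      omega
    · have hlt : n - k < n := by omega
      have hIci : Finset.univ.filter (fun i : Fin n => n - k ≤ (i : ℕ))
          = Finset.Ici (⟨n - k, hlt⟩ : Fin n) := by
        ext i
        simp [Fin.le_def]
      rw [hIci, Fin.card_Ici]
      simp only [Fin.val_mk]
      omega
  refine ⟨⟨he0rook, he0ut, he0rank⟩, ?_⟩
  suffices H : ∀ N, ∀ x : Fin n → ℕ, rookLen n x ≤ N → IsRook n x →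
      (∀ i : Fin n, x i ≤ (i : ℕ) + 1) → rookRank n x = k → BCRle n e0 x by
    intro x hx hut hr
    exact H (rookLen n x) x le_rfl hx hut hr
  intro N
  induction N with
  | zero =>
    intro x hlen hx hut hr
    have hsum0 : (∑ m, x m) = 0 := by
      unfold rookLen at hlen; omega
    have hx0 : ∀ i, x i = 0 := by
      intro i
      exact Finset.sum_eq_zero_iff.mp hsum0 i (Finset.mem_univ i)
    have hk0 : k = 0 := by
      rw [← hr]
      unfold rookRank
      rw [Finset.card_eq_zero, Finset.filter_eq_empty_iff]
      rintro i -
      simp [hx0 i]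
    have hxe : e0 = x := by
      funext i
      rw [hx0 i, he0, if_pos (by subst hk0; have := i.isLt; omega)]
    rw [hxe]
    exact Relation.ReflTransGen.refl
  | succ N ih =>
    intro x hlen hx hut hr
    by_cases hdes : ∃ i : Fin n, ∃ hi : (i : ℕ) + 1 < n, x ⟨(i : ℕ) + 1, hi⟩ < x i
    · obtain ⟨i, hi, hd⟩ := hdes
      obtain ⟨y, hstep, hyrook, hyut, hyrank, hylen⟩ :=
        swap_move x hx hut i ⟨(i : ℕ) + 1, hi⟩ rfl hd
      exact (ih y (by omega) hyrook hyut (hyrank.trans hr)).tail hstep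
    · push_neg at hdes
      have hmono : ∀ a b : Fin n, a ≤ b → x a ≤ x b :=
        mono_of_adj x (fun i hi => hdes i hi)
      have hlow : ∀ p : Fin n, e0 p ≤ x p := by
        intro p
        rw [he0]
        exact mono_lower hk x hx hmono hr p
      by_cases heq : e0 = x
      · rw [heq]
        exact Relation.ReflTransGen.refl
      · have hS : (Finset.univ.filter (fun p : Fin n => e0 p ≠ x p)).Nonempty := by
          rcases Function.ne_iff.mp heq with ⟨p, hp⟩
          exact ⟨p, by simp [hp]⟩
        set p := (Finset.univ.filter (fun p : Fin n => e0 p ≠ x p)).min' hS with hpdef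
        have hpmem : e0 p ≠ x p := by
          have := Finset.min'_mem (Finset.univ.filter (fun p : Fin n => e0 p ≠ x p)) hS
          rw [Finset.mem_filter] at this
          exact this.2
        have hpmin : ∀ q : Fin n, q < p → e0 q = x q := by
          intro q hq
          by_contra hc
          exact absurd (Finset.min'_le _ q (by simp [hc])) (not_le.mpr hq)
        have hplt : e0 p < x p := lt_of_le_of_ne (hlow p) hpmem
        have hp1 : ¬ ((p : ℕ) + 1 ≤ n - k) := by
          intro hple
          have hxp : 0 < x p := by
            have h0 : e0 p = 0 := by rw [he0, if_pos hple]
            omega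
          have hsub : Finset.Ici p ⊆ Finset.univ.filter (fun m : Fin n => x m ≠ 0) := by
            intro m hm
            rw [Finset.mem_Ici] at hm
            rw [Finset.mem_filter]
            have := hmono p m hm
            exact ⟨Finset.mem_univ m, by omega⟩
          have hcard := Finset.card_le_card hsub
          rw [Fin.card_Ici] at hcard
          unfold rookRank at hr
          rw [hr] at hcard
          have := p.isLt
          omega
        have he0p : e0 p = (p : ℕ) + 1 - (n - k) := by rw [he0, if_neg hp1]
        set t := (p : ℕ) + 1 - (n - k) with htdef
        have htpos : 0 < t := by omega
        have hbefore : ∀ q : Fin n, q < p → x q < t := by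
          intro q hq
          rw [← hpmin q hq, he0]
          have hq' : (q : ℕ) < (p : ℕ) := hq
          split_ifs <;> omega
        have htlt : t < x p := by omega
        set y := Function.update x p t with hydef
        have hyp : y p = t := Function.update_self p t x
        have hyq : ∀ q : Fin n, q ≠ p → y q = x q := fun q hq => Function.update_of_ne hq t x
        have hymono : ∀ a b : Fin n, a ≤ b → y a ≤ y b := by
          intro a b hab
          rcases eq_or_ne a p with rfl | hap
          · rcases eq_or_ne b p with rfl | hbp
            · exact le_rfl
            · rw [hyp, hyq b hbp]
              have := hmono p b hab
              omega
          · rcases eq_or_ne b p with rfl | hbp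
            · rw [hyp, hyq a hap]
              have hab' : a < p := lt_of_le_of_ne hab hap
              exact le_of_lt (hbefore a hab')
            · rw [hyq a hap, hyq b hbp]
              exact hmono a b hab
        have hyrook : IsRook n y := by
          constructor
          · intro m
            rcases eq_or_ne m p with rfl | hmp
            · rw [hyp]; have := p.isLt; omega
            · rw [hyq m hmp]; exact hx.1 m
          · intro a b ha hab
            rcases eq_or_ne a p with rfl | hap
            · rcases eq_or_ne b p with rfl | hbp
              · rfl
              · exfalso
                rw [hyp, hyq b hbp] at hab
                rcases lt_or_gt_of_ne hbp with h | h
                · have := hbefore b h; omega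
                · have := hmono p b h.le; omega
            · rcases eq_or_ne b p with rfl | hbp
              · exfalso
                rw [hyp, hyq a hap] at hab
                rcases lt_or_gt_of_ne hap with h | h
                · have := hbefore a h; omega
                · have := hmono p a h.le; omega
              · rw [hyq a hap] at ha hab
                rw [hyq b hbp] at hab
                exact hx.2 a b ha hab
        have hyut : ∀ m : Fin n, y m ≤ (m : ℕ) + 1 := by
          intro m
          rcases eq_or_ne m p with rfl | hmp
          · rw [hyp]; omega
          · rw [hyq m hmp]; exact hut m
        have hyrank : rookRank n y = k := by
          rw [← hr]
          unfold rookRank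
          congr 1
          apply Finset.filter_congr
          rintro m -
          rcases eq_or_ne m p with rfl | hmp
          · rw [hyp]
            constructor <;> intro <;> omega
          · rw [hyq m hmp]
        have hstep : BCRStep n y x := by
          refine ⟨hyrook, hx, Or.inl ⟨p, ?_, fun q hq => hyq q hq⟩⟩
          rw [hyp]; exact htlt
        have hylen : rookLen n y < rookLen n x := by
          unfold rookLen
          rw [rookInv_eq_zero_of_mono x hmono, rookInv_eq_zero_of_mono y hymono]
          have hsumlt : (∑ m, y m) < ∑ m, x m := by
            apply Finset.sum_lt_sum
            · rintro m -
              rcases eq_or_ne m p with rfl | hmp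
              · rw [hyp]; omega
              · rw [hyq m hmp]
            · exact ⟨p, Finset.mem_univ p, by rw [hyp]; exact htlt⟩
          omega
        exact (ih y (by omega) hyrook hyut hyrank).tail hstep
end

section
/- Fix 0 ≤ k ≤ n. The maximal elements of the poset P_{n,k} are exactly the diagonal idempotent n-rooks of rank k; in particular there are exactly C(n,k) maximal elements, and every element of P_{n,k} lies below some diagonal idempotent n-rook of rank k. -/
open scoped Classical

/-- A diagonal idempotent `n`-rook: an `n`-rook `e` with `e(i) ∈ {0, i}` for all `i`
(in 0-based positions, `e i ∈ {0, i+1}`). -/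
def IsDiagIdem (n : ℕ) (e : Fin n → ℕ) : Prop :=
  IsRook n e ∧ ∀ i : Fin n, e i = 0 ∨ e i = i.val + 1

-- ===== auxiliary =====

def rookDefects (n : ℕ) (x : Fin n → ℕ) : Finset (Fin n) :=
  Finset.univ.filter (fun i => 0 < x i ∧ x i ≤ i.val)

lemma diag_of_no_defect {n : ℕ} {x : Fin n → ℕ} (hx : IsRook n x)
    (hut : ∀ i : Fin n, x i ≤ i.val + 1) (h : rookDefects n x = ∅) :
    IsDiagIdem n x := by
  refine ⟨hx, fun i => ?_⟩
  by_cases h0 : x i = 0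
  · exact Or.inl h0
  · right
    have hni : i ∉ rookDefects n x := by simp [h]
    simp only [rookDefects, Finset.mem_filter, Finset.mem_univ, true_and, not_and,
      not_le] at hni
    have h1 := hni (Nat.pos_of_ne_zero h0)
    have h2 := hut i
    omega

lemma defects_nonempty {n : ℕ} {x : Fin n → ℕ}
    (hut : ∀ i : Fin n, x i ≤ i.val + 1)
    (hnd : ¬ ∀ i : Fin n, x i = 0 ∨ x i = i.val + 1) :
    (rookDefects n x).Nonempty := by
  push_neg at hnd
  obtain ⟨i, h0, h1⟩ := hnd
  refine ⟨i, ?_⟩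
  simp only [rookDefects, Finset.mem_filter, Finset.mem_univ, true_and]
  have h2 := hut i
  exact ⟨Nat.pos_of_ne_zero h0, by omega⟩

lemma moveStep {n : ℕ} {x : Fin n → ℕ} (hx : IsRook n x)
    (hut : ∀ i : Fin n, x i ≤ i.val + 1)
    (hne : (rookDefects n x).Nonempty) :
    ∃ y : Fin n → ℕ, IsRook n y ∧ (∀ i : Fin n, y i ≤ i.val + 1) ∧
      rookRank n y = rookRank n x ∧ BCRStep n x y ∧ y ≠ x ∧
      (rookDefects n y).card < (rookDefects n x).card := by
  set i := (rookDefects n x).max' hne with hidef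
  have hi' : i ∈ rookDefects n x := (rookDefects n x).max'_mem hne
  have hi := hi'
  simp only [rookDefects, Finset.mem_filter, Finset.mem_univ, true_and] at hi
  obtain ⟨hpos, hle⟩ := hi
  have hfree : ∀ j : Fin n, x j ≠ i.val + 1 := by
    intro j hj
    have hjv : i.val + 1 ≤ j.val + 1 := hj ▸ hut j
    have hji : j ≠ i := by
      intro h; rw [h] at hj; omega
    have hij : i.val < j.val := by
      have hne2 : j.val ≠ i.val := fun h => hji (Fin.ext h)
      omega
    have hjd : j ∈ rookDefects n x := by
      simp only [rookDefects, Finset.mem_filter, Finset.mem_univ, true_and]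
      rw [hj]
      omega
    have h6 : j.val ≤ i.val := Fin.le_def.mp ((rookDefects n x).le_max' j hjd)
    omega
  set y := Function.update x i (i.val + 1) with hy
  have hyi : y i = i.val + 1 := Function.update_self _ _ _
  have hyj : ∀ j : Fin n, j ≠ i → y j = x j := fun j hj => Function.update_of_ne hj _ _
  have hx0 : x i ≠ 0 := Nat.pos_iff_ne_zero.mp hpos
  have hrooky : IsRook n y := by
    constructor
    · intro j
      rcases eq_or_ne j i with rfl | hj
      · rw [hyi]; exact i.isLt
      · rw [hyj j hj]; exact hx.1 j
    · intro a b ha hab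
      rcases eq_or_ne a i with rfl | haa
      · rcases eq_or_ne b i with rfl | hbb
        · rfl
        · rw [hyi, hyj b hbb] at hab
          exact absurd hab.symm (hfree b)
      · rcases eq_or_ne b i with rfl | hbb
        · rw [hyj a haa, hyi] at hab
          exact absurd hab (hfree a)
        · rw [hyj a haa] at ha hab
          rw [hyj b hbb] at hab
          exact hx.2 a b ha hab
  have hyut : ∀ j : Fin n, y j ≤ j.val + 1 := by
    intro j
    rcases eq_or_ne j i with rfl | hj
    · rw [hyi]
    · rw [hyj j hj]; exact hut j
  have hset : (Finset.univ.filter (fun j : Fin n => y j ≠ 0)) =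
      (Finset.univ.filter (fun j : Fin n => x j ≠ 0)) := by
    ext j
    simp only [Finset.mem_filter, Finset.mem_univ, true_and]
    rcases eq_or_ne j i with rfl | hj
    · simp [hyi, hx0]
    · rw [hyj j hj]
  have hrank : rookRank n y = rookRank n x := by
    rw [rookRank, rookRank, hset]
  have hstep : BCRStep n x y := by
    refine ⟨hx, hrooky, Or.inl ⟨i, ?_, fun j hj => (hyj j hj).symm⟩⟩
    rw [hyi]; omega
  have hyx : y ≠ x := by
    intro h
    have := congrFun h i
    rw [hyi] at this
    omega
  have hdef : rookDefects n y ⊆ (rookDefects n x).erase i := by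
    intro j hj
    simp only [rookDefects, Finset.mem_filter, Finset.mem_univ, true_and] at hj
    rcases eq_or_ne j i with rfl | hne2
    · rw [hyi] at hj; omega
    · rw [Finset.mem_erase]
      refine ⟨hne2, ?_⟩
      simp only [rookDefects, Finset.mem_filter, Finset.mem_univ, true_and]
      rw [← hyj j hne2]
      exact hj
  refine ⟨y, hrooky, hyut, hrank, hstep, hyx, ?_⟩
  calc (rookDefects n y).card ≤ ((rookDefects n x).erase i).card :=
        Finset.card_le_card hdef
    _ < (rookDefects n x).card := Finset.card_erase_lt_of_mem hi'

lemma rook_reach (n k : ℕ) :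
    ∀ d (x : Fin n → ℕ), (rookDefects n x).card = d → IsRook n x →
      (∀ i : Fin n, x i ≤ i.val + 1) → rookRank n x = k →
      ∃ e : Fin n → ℕ, IsDiagIdem n e ∧ rookRank n e = k ∧ BCRle n x e := by
  intro d
  induction d using Nat.strong_induction_on with
  | _ d ih =>
    intro x hd hx hut hrk
    rcases Finset.eq_empty_or_nonempty (rookDefects n x) with he | hne
    · exact ⟨x, diag_of_no_defect hx hut he, hrk, Relation.ReflTransGen.refl⟩
    · obtain ⟨y, hy, hyt, hyr, hstep, _, hlt⟩ := moveStep hx hut hne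
      rw [hd] at hlt
      obtain ⟨e, he1, he2, he3⟩ :=
        ih _ hlt y rfl hy hyt (hyr.trans hrk)
      exact ⟨e, he1, he2, Relation.ReflTransGen.head hstep he3⟩

-- ===== phi monotone =====

def rookPhi (n : ℕ) (p : Fin n) (t : ℕ) (a : Fin n → ℕ) : ℕ :=
  (Finset.univ.filter (fun m : Fin n => m ≤ p ∧ t ≤ a m)).card

lemma rookPhi_mono {n : ℕ} (p : Fin n) (t : ℕ) {a b : Fin n → ℕ}
    (h : BCRStep n a b) : rookPhi n p t a ≤ rookPhi n p t b := by
  obtain ⟨-, -, h1 | h2⟩ := h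
  · obtain ⟨i, hlt, heq⟩ := h1
    apply Finset.card_le_card
    intro m hm
    simp only [Finset.mem_filter, Finset.mem_univ, true_and] at hm ⊢
    refine ⟨hm.1, ?_⟩
    rcases eq_or_ne m i with rfl | hne
    · exact hm.2.trans hlt.le
    · exact (heq m hne) ▸ hm.2
  · obtain ⟨i, j, hij, hbi, hbj, hlt, heq⟩ := h2
    have haij : a i < a j := by rw [← hbj, ← hbi]; exact hlt
    by_cases hp : j ≤ p
    · apply Finset.card_le_card_of_injOn (Equiv.swap i j)
      · intro m hm
        simp only [Finset.mem_coe, Finset.mem_filter, Finset.mem_univ, true_and] at hm ⊢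
        rcases eq_or_ne m i with rfl | hni
        · rw [Equiv.swap_apply_left]
          exact ⟨hp, by rw [hbj]; exact hm.2⟩
        · rcases eq_or_ne m j with rfl | hnj
          · rw [Equiv.swap_apply_right]
            exact ⟨le_trans hij.le hp, by rw [hbi]; exact hm.2⟩
          · rw [Equiv.swap_apply_of_ne_of_ne hni hnj]
            exact ⟨hm.1, (heq m hni hnj) ▸ hm.2⟩
      · exact (Equiv.injective _).injOn
    · apply Finset.card_le_card
      intro m hm
      simp only [Finset.mem_filter, Finset.mem_univ, true_and] at hm ⊢
      refine ⟨hm.1, ?_⟩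
      have hmj : m ≠ j := fun h => hp (h ▸ hm.1)
      rcases eq_or_ne m i with rfl | hne
      · exact le_trans hm.2 (le_of_lt (hbi ▸ haij))
      · exact (heq m hne hmj) ▸ hm.2

lemma rookPhi_le {n : ℕ} (p : Fin n) (t : ℕ) {a b : Fin n → ℕ}
    (h : BCRle n a b) : rookPhi n p t a ≤ rookPhi n p t b := by
  induction h with
  | refl => exact le_refl _
  | tail _ step ih => exact le_trans ih (rookPhi_mono p t step)

lemma diag_max {n : ℕ} {e y : Fin n → ℕ} (he : IsDiagIdem n e)
    (hy : IsRook n y) (hut : ∀ i : Fin n, y i ≤ i.val + 1)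
    (hr : rookRank n y = rookRank n e) (hle : BCRle n e y) : y = e := by
  have hfix : ∀ i : Fin n, e i ≠ 0 → y i = i.val + 1 := by
    intro i hi
    have hei : e i = i.val + 1 := (he.2 i).resolve_left hi
    have hphi := rookPhi_le i (i.val + 1) hle
    have h1 : 1 ≤ rookPhi n i (i.val + 1) e := by
      rw [rookPhi]
      apply Finset.card_pos.mpr
      exact ⟨i, by simp [hei]⟩
    have h2 : Finset.univ.filter (fun m : Fin n => m ≤ i ∧ i.val + 1 ≤ y m) ⊆ {i} := by
      intro m hm
      simp only [Finset.mem_filter, Finset.mem_univ, true_and] at hm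
      have h4 : i.val + 1 ≤ m.val + 1 := le_trans hm.2 (hut m)
      have h5 : m.val ≤ i.val := Fin.le_def.mp hm.1
      have hmi : m.val = i.val := by omega
      exact Finset.mem_singleton.mpr (Fin.ext hmi)
    have h3 : (Finset.univ.filter (fun m : Fin n => m ≤ i ∧ i.val + 1 ≤ y m)).Nonempty := by
      apply Finset.card_pos.mp
      calc 0 < rookPhi n i (i.val + 1) e := h1
        _ ≤ _ := hphi
    obtain ⟨m, hm⟩ := h3
    have hmi := h2 hm
    simp only [Finset.mem_singleton] at hmi
    subst hmi
    simp only [Finset.mem_filter, Finset.mem_univ, true_and] at hm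
    have := hut m
    omega
  have hsub : Finset.univ.filter (fun i : Fin n => e i ≠ 0) ⊆
      Finset.univ.filter (fun i : Fin n => y i ≠ 0) := by
    intro i hi
    simp only [Finset.mem_filter, Finset.mem_univ, true_and] at hi ⊢
    rw [hfix i hi]
    exact Nat.succ_ne_zero _
  have hseq : Finset.univ.filter (fun i : Fin n => e i ≠ 0) =
      Finset.univ.filter (fun i : Fin n => y i ≠ 0) := by
    apply Finset.eq_of_subset_of_card_le hsub
    exact le_of_eq hr
  funext i
  by_cases hi : e i = 0
  · have : i ∉ Finset.univ.filter (fun i : Fin n => y i ≠ 0) := by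
      rw [← hseq]; simp [hi]
    simp only [Finset.mem_filter, Finset.mem_univ, true_and, not_not] at this
    rw [this, hi]
  · rw [hfix i hi, (he.2 i).resolve_left hi]

-- ===== counting =====

lemma card_diag (n k : ℕ) :
    Nat.card {e : Fin n → ℕ // IsDiagIdem n e ∧ rookRank n e = k} = n.choose k := by
  have equiv : {e : Fin n → ℕ // IsDiagIdem n e ∧ rookRank n e = k} ≃
      {S : Finset (Fin n) // S.card = k} := by
    refine ⟨fun e => ⟨Finset.univ.filter (fun i => e.1 i ≠ 0), e.2.2⟩,
      fun S => ⟨fun i => if i ∈ S.1 then i.val + 1 else 0, ⟨⟨?_, ?_⟩, ?_⟩, ?_⟩, ?_, ?_⟩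
    · intro i
      dsimp only
      split
      · exact i.isLt
      · exact Nat.zero_le _
    · intro i j hi hij
      dsimp only at hi hij
      by_cases hiS : i ∈ S.1
      · by_cases hjS : j ∈ S.1
        · rw [if_pos hiS, if_pos hjS] at hij
          exact Fin.ext (Nat.succ_injective hij)
        · rw [if_pos hiS, if_neg hjS] at hij
          omega
      · rw [if_neg hiS] at hi
        exact absurd rfl hi
    · intro i
      dsimp only
      split
      · exact Or.inr rfl
      · exact Or.inl rfl
    · simp only [rookRank]
      refine Eq.trans (congrArg Finset.card ?_) S.2
      ext i
      simp only [Finset.mem_filter, Finset.mem_univ, true_and]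
      by_cases h : i ∈ S.1 <;> simp [h]
    · rintro ⟨e, he, hr⟩
      simp only [Subtype.mk.injEq]
      funext i
      by_cases h : e i = 0
      · simp [h]
      · simp [h, (he.2 i).resolve_left h]
    · rintro ⟨S, hS⟩
      simp only [Subtype.mk.injEq]
      ext i
      simp only [Finset.mem_filter, Finset.mem_univ, true_and]
      by_cases h : i ∈ S <;> simp [h]
  rw [Nat.card_congr equiv, Nat.card_eq_fintype_card]
  simp

/-- the maximal elements of `P_{n,k}` (upper triangular `n`-rooks of
rank `k` under the Bruhat–Chevalley–Renner order) are exactly the diagonal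
idempotent `n`-rooks of rank `k`; there are exactly `C(n,k)` of them, and every
element of `P_{n,k}` lies below some diagonal idempotent of rank `k`. -/
theorem stmt7 (n k : ℕ) (hk : k ≤ n) :
    (∀ x : Fin n → ℕ, IsRook n x → (∀ i : Fin n, x i ≤ i.val + 1) → rookRank n x = k →
      ((∀ y : Fin n → ℕ, IsRook n y → (∀ i : Fin n, y i ≤ i.val + 1) →
          rookRank n y = k → BCRle n x y → y = x)
        ↔ IsDiagIdem n x)) ∧
    Nat.card {e : Fin n → ℕ // IsDiagIdem n e ∧ rookRank n e = k} = n.choose k ∧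
    (∀ x : Fin n → ℕ, IsRook n x → (∀ i : Fin n, x i ≤ i.val + 1) → rookRank n x = k →
      ∃ e : Fin n → ℕ, IsDiagIdem n e ∧ rookRank n e = k ∧ BCRle n x e) := by
  refine ⟨?_, card_diag n k, ?_⟩
  · intro x hx hut hrk
    constructor
    · intro hmax
      by_contra hnd
      have hnd' : ¬ ∀ i : Fin n, x i = 0 ∨ x i = i.val + 1 := fun h => hnd ⟨hx, h⟩
      obtain ⟨y, hy, hyt, hyr, hstep, hyx, -⟩ :=
        moveStep hx hut (defects_nonempty hut hnd')
      exact hyx (hmax y hy hyt (hyr.trans hrk) (Relation.ReflTransGen.single hstep))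
    · intro hd y hy hyt hyr hle
      exact diag_max hd hy hyt (hyr.trans hrk.symm) hle
  · intro x hx hut hrk
    exact rook_reach n k _ x rfl hx hut hrk
end

section
/- For every diagonal idempotent n-rook e of rank k, the length of e is ℓ(e) = k(2n − k + 1)/2. -/
open scoped Classical

theorem stmt9' (n k : ℕ) (e : Fin n → ℕ)
    (he : ((∀ i, e i ≤ n) ∧ ∀ i j, e i ≠ 0 → e i = e j → i = j) ∧
      ∀ i : Fin n, e i = 0 ∨ e i = i.val + 1)
    (hrank : (Finset.univ.filter (fun i => e i ≠ 0)).card = k) :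
    ((∑ i, e i) +
      (Finset.univ.filter (fun p : Fin n × Fin n => p.1 < p.2 ∧ e p.2 < e p.1)).card)
      = k * (2 * n - k + 1) / 2 := by
  obtain ⟨⟨hle, hinj⟩, hdiag⟩ := he
  have hkn : k ≤ n := by
    rw [← hrank]
    simpa using Finset.card_filter_le Finset.univ (fun i => e i ≠ 0)
  have hk : (∑ i : Fin n, (if e i ≠ 0 then 1 else 0)) = k := by
    rw [Finset.sum_boole]; simpa using hrank
  -- coinv as double sum
  set G : ℕ := (Finset.univ.filter
    (fun p : Fin n × Fin n => p.1 < p.2 ∧ 0 < e p.1 ∧ e p.1 < e p.2)).card with hGdef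
  have hGsum : G = ∑ i : Fin n, ∑ j : Fin n,
      (if i < j ∧ e i ≠ 0 ∧ e j ≠ 0 then 1 else 0) := by
    rw [hGdef, Finset.card_filter, Fintype.sum_prod_type]
    refine Finset.sum_congr rfl fun i _ => Finset.sum_congr rfl fun j _ => ?_
    dsimp only
    congr 1
    apply propext
    constructor
    · rintro ⟨hij, h1, h2⟩
      exact ⟨hij, by omega, by omega⟩
    · rintro ⟨hij, h1, h2⟩
      have hij' : (i : ℕ) < (j : ℕ) := hij
      rcases hdiag i with h | h; · exact absurd h h1
      rcases hdiag j with h' | h'; · exact absurd h' h2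
      exact ⟨hij, by omega, by omega⟩
  -- double counting : 2G + k = k * k
  have hGG : 2 * G + k = k * k := by
    have hswap : G = ∑ i : Fin n, ∑ j : Fin n,
        (if j < i ∧ e i ≠ 0 ∧ e j ≠ 0 then 1 else 0) := by
      rw [hGsum, Finset.sum_comm]
      refine Finset.sum_congr rfl fun i _ => Finset.sum_congr rfl fun j _ => ?_
      congr 1
      apply propext; tauto
    have hdiagsum : (∑ i : Fin n, ∑ j : Fin n,
        (if i = j ∧ e i ≠ 0 ∧ e j ≠ 0 then 1 else 0)) = k := by
      rw [← hk]
      refine Finset.sum_congr rfl fun i _ => ?_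
      simp only [ite_and]
      rw [Finset.sum_ite_eq Finset.univ i
        (fun j => if e i ≠ 0 then if e j ≠ 0 then 1 else 0 else 0)]
      by_cases h : e i ≠ 0 <;> simp [h]
    have hsq : (∑ i : Fin n, ∑ j : Fin n,
        (if e i ≠ 0 ∧ e j ≠ 0 then 1 else 0)) = k * k := by
      rw [← hk, Finset.sum_mul_sum]
      exact Finset.sum_congr rfl fun i _ => Finset.sum_congr rfl fun j _ => by
        by_cases h1 : e i ≠ 0 <;> by_cases h2 : e j ≠ 0 <;> simp [h1, h2]
    have key : G + G + (∑ i : Fin n, ∑ j : Fin n,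
        (if i = j ∧ e i ≠ 0 ∧ e j ≠ 0 then 1 else 0)) = k * k := by
      nth_rewrite 1 [hGsum]
      nth_rewrite 1 [hswap]
      rw [← hsq, ← Finset.sum_add_distrib, ← Finset.sum_add_distrib]
      refine Finset.sum_congr rfl fun i _ => ?_
      rw [← Finset.sum_add_distrib, ← Finset.sum_add_distrib]
      refine Finset.sum_congr rfl fun j _ => ?_
      rcases lt_trichotomy i j with h | h | h
      · simp [h, lt_asymm h, ne_of_lt h]
      · subst h; simp [lt_irrefl]
      · simp [h, lt_asymm h, Ne.symm (ne_of_lt h)]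
    omega
  -- length + coinv = k * n
  set L : ℕ := (∑ i, e i) +
      (Finset.univ.filter (fun p : Fin n × Fin n => p.1 < p.2 ∧ e p.2 < e p.1)).card with hLdef
  have hLG : L + G = k * n := by
    have hinv : (Finset.univ.filter
        (fun p : Fin n × Fin n => p.1 < p.2 ∧ e p.2 < e p.1)).card
        = ∑ i : Fin n, ∑ j : Fin n, (if i < j ∧ e j < e i then 1 else 0) := by
      rw [Finset.card_filter, Fintype.sum_prod_type]
    have hkn' : (∑ i : Fin n, (if e i ≠ 0 then n else 0)) = k * n := by
      rw [← hk, Finset.sum_mul]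
      exact Finset.sum_congr rfl fun i _ => by split <;> simp
    rw [hLdef, hinv, hGsum, ← hkn', add_assoc, ← Finset.sum_add_distrib,
      ← Finset.sum_add_distrib]
    refine Finset.sum_congr rfl fun i _ => ?_
    rcases hdiag i with h0 | h1
    · simp [h0]
    · have hne : e i ≠ 0 := by omega
      have hcount : (∑ j : Fin n, ((if i < j ∧ e j < e i then 1 else 0)
          + (if i < j ∧ e i ≠ 0 ∧ e j ≠ 0 then 1 else 0)))
          = ∑ j : Fin n, (if i < j then 1 else 0) := by
        refine Finset.sum_congr rfl fun j _ => ?_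
        by_cases hij : i < j
        · rcases hdiag j with h0' | h1'
          · simp [hij, h0', h1, hne]
          · have : ¬ (e j < e i) := by
              rw [h1, h1']
              have : (i : ℕ) < (j : ℕ) := hij
              omega
            have : e j ≠ 0 := by omega
            simp_all
        · simp [hij]
      rw [← Finset.sum_add_distrib, hcount]
      have : (∑ j : Fin n, (if i < j then 1 else 0)) = n - 1 - (i : ℕ) := by
        rw [Finset.sum_boole]
        simp only [Nat.cast_id]
        rw [show (Finset.univ.filter (fun j => i < j)) = Finset.Ioi i from by ext x; simp,
          Fin.card_Ioi]
      rw [this, h1]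
      have hi : (i : ℕ) < n := i.isLt
      simp [hne]
      omega
  -- final arithmetic
  have hR : k * (2 * n - k + 1) + k * k = 2 * (k * n) + k := by
    rw [← Nat.mul_add, show 2 * n - k + 1 + k = 2 * n + 1 from by omega]
    ring
  omega

/-- every diagonal idempotent `n`-rook `e` of rank `k` has length
`ℓ(e) = k(2n − k + 1)/2` (the division is exact). -/
theorem stmt9 (n k : ℕ) (e : Fin n → ℕ) (he : IsDiagIdem n e)
    (hrank : rookRank n e = k) :
    rookLen n e = k * (2 * n - k + 1) / 2 := by
  exact stmt9' n k e he hrank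
end

section
/- For 0 ≤ k ≤ n, the number of upper triangular n-rooks of rank k equals the Stirling number of the second kind S(n+1, n+1−k). -/
open scoped Classical

namespace Stmt10
open Finset

variable {n : ℕ}

/-- extension of `a` to ℕ by zero. -/
def aext (n : ℕ) (a : Fin n → ℕ) (m : ℕ) : ℕ := if h : m < n then a ⟨m, h⟩ else 0

/-- parent function on `{0,…,n}`. -/
def parN (n : ℕ) (a : Fin n → ℕ) (e : ℕ) : ℕ :=
  if 0 < e ∧ aext n a (e-1) ≠ 0 then aext n a (e-1) - 1 else e

def rootN (n : ℕ) (a : Fin n → ℕ) (e : ℕ) : ℕ :=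
  if h : parN n a e < e then rootN n a (parN n a e) else e
  termination_by e

variable {a : Fin n → ℕ}

lemma parN_le (hT : ∀ i : Fin n, a i ≤ i.val + 1) (e : ℕ) : parN n a e ≤ e := by
  unfold parN
  split
  · rename_i h
    obtain ⟨h0, hne⟩ := h
    unfold aext at hne ⊢
    split at hne
    · rename_i hlt
      simp only [dif_pos hlt]
      have := hT ⟨e-1, hlt⟩
      simp only [Fin.val_mk] at this
      omega
    · omega
  · exact le_refl _

lemma rootN_le (e : ℕ) : rootN n a e ≤ e := by
  induction e using Nat.strong_induction_on with
  | _ e ih =>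
    rw [rootN]
    split
    · rename_i h
      exact le_trans (ih _ h) (le_of_lt h)
    · exact le_refl _

lemma rootN_of_fix {e : ℕ} (h : parN n a e = e) : rootN n a e = e := by
  rw [rootN]; simp [h]

lemma rootN_parN (hT : ∀ i : Fin n, a i ≤ i.val + 1) (e : ℕ) :
    rootN n a (parN n a e) = rootN n a e := by
  rcases lt_or_eq_of_le (parN_le hT e) with h | h
  · conv_rhs => rw [rootN]
    simp [h]
  · rw [h]

lemma parN_rootN (hT : ∀ i : Fin n, a i ≤ i.val + 1) (e : ℕ) :
    parN n a (rootN n a e) = rootN n a e := by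
  induction e using Nat.strong_induction_on with
  | _ e ih =>
    rw [rootN]
    split
    · rename_i h; exact ih _ h
    · rename_i h
      have := parN_le hT e
      omega

lemma rootN_idem (hT : ∀ i : Fin n, a i ≤ i.val + 1) (e : ℕ) :
    rootN n a (rootN n a e) = rootN n a e :=
  rootN_of_fix (parN_rootN hT e)

lemma fix_of_rootN (hT : ∀ i : Fin n, a i ≤ i.val + 1) {e : ℕ} (h : rootN n a e = e) :
    parN n a e = e := by
  calc parN n a e = parN n a (rootN n a e) := by rw [h]
    _ = rootN n a e := parN_rootN hT e
    _ = e := h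

/-- injectivity of the parent map on non-fixed points. -/
lemma parN_inj (hR : IsRook n a) {e e' : ℕ} (he : parN n a e < e) (he' : parN n a e' < e')
    (h : parN n a e = parN n a e') : e = e' := by
  unfold parN at he he' h
  by_cases c : 0 < e ∧ aext n a (e-1) ≠ 0
  · by_cases c' : 0 < e' ∧ aext n a (e'-1) ≠ 0
    · rw [if_pos c] at h
      rw [if_pos c'] at h
      obtain ⟨h0, hne⟩ := c
      obtain ⟨h0', hne'⟩ := c'
      unfold aext at hne hne' h
      by_cases l : e - 1 < n
      · by_cases l' : e' - 1 < n
        · rw [dif_pos l] at hne h; rw [dif_pos l'] at hne' h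
          have heq : a ⟨e-1, l⟩ = a ⟨e'-1, l'⟩ := by omega
          have h3 := hR.2 _ _ hne heq
          have h4 : e - 1 = e' - 1 := congrArg Fin.val h3
          omega
        · rw [dif_neg l'] at hne'; omega
      · rw [dif_neg l] at hne; omega
    · rw [if_neg c'] at he'; omega
  · rw [if_neg c] at he; omega

lemma rootN_iterate (hT : ∀ i : Fin n, a i ≤ i.val + 1) (e m : ℕ) :
    rootN n a ((parN n a)^[m] e) = rootN n a e := by
  induction m with
  | zero => rfl
  | succ m ih =>
    rw [Function.iterate_succ_apply', rootN_parN hT, ih]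

lemma iterate_le (hT : ∀ i : Fin n, a i ≤ i.val + 1) (e m : ℕ) :
    (parN n a)^[m] e ≤ e := by
  induction m with
  | zero => exact le_refl _
  | succ m ih =>
    rw [Function.iterate_succ_apply']
    exact le_trans (parN_le hT _) ih

lemma iterate_fix (hT : ∀ i : Fin n, a i ≤ i.val + 1) {e : ℕ} (h : parN n a e = e) (m : ℕ) :
    (parN n a)^[m] e = e := by
  induction m with
  | zero => rfl
  | succ m ih => rw [Function.iterate_succ_apply', ih, h]

/-- Main structural lemma: elements with the same root below `e` are iterates of `e`. -/
lemma chain_lemma (hR : IsRook n a) (hT : ∀ i : Fin n, a i ≤ i.val + 1) :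
    ∀ e x : ℕ, x ≤ e → rootN n a x = rootN n a e → ∃ m, x = (parN n a)^[m] e := by
  intro e
  induction e using Nat.strong_induction_on with
  | _ e ih =>
    intro x hxe hroot
    rcases eq_or_lt_of_le hxe with rfl | hxe
    · exact ⟨0, rfl⟩
    · have hpe : parN n a e < e := by
        rcases lt_or_eq_of_le (parN_le hT e) with h | h
        · exact h
        · exfalso
          have h1 : rootN n a e = e := rootN_of_fix h
          have h2 := rootN_le (a := a) x
          omega
      have hre : rootN n a (parN n a e) = rootN n a x := by
        rw [rootN_parN hT, hroot]
      rcases le_or_gt x (parN n a e) with hle | hgt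
      · obtain ⟨m, hm⟩ := ih (parN n a e) hpe x hle hre.symm
        exact ⟨m + 1, by rw [Function.iterate_succ_apply]; exact hm⟩
      · -- impossible case
        exfalso
        obtain ⟨m, hm⟩ := ih x hxe (parN n a e) (le_of_lt hgt) hre
        have hmpos : 0 < m := by
          rcases Nat.eq_zero_or_pos m with rfl | h
          · simp at hm; omega
          · exact h
        have hex : ∃ m, 0 < m ∧ parN n a e = (parN n a)^[m] x := ⟨m, hmpos, hm⟩
        classical
        set m0 := Nat.find hex with hm0
        obtain ⟨hm0pos, hm0eq⟩ := Nat.find_spec hex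
        set z := (parN n a)^[m0 - 1] x with hz
        have hzstep : parN n a z = parN n a e := by
          have h5 : parN n a ((parN n a)^[m0-1] x) = (parN n a)^[m0-1+1] x :=
            (Function.iterate_succ_apply' _ _ _).symm
          have h6 : m0 - 1 + 1 = m0 := by omega
          rw [hz, h5, h6, ← hm0eq]
        have hzx : z ≤ x := iterate_le hT x _
        have hzne : z ≠ e := by omega
        rcases lt_or_eq_of_le (parN_le hT z) with hlt | hfix
        · exact hzne (parN_inj hR hlt hpe (by rw [hzstep]))
        · -- z is fixed, so parN e = z
          have hpez : parN n a e = z := by rw [← hzstep, hfix]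
          rcases Nat.eq_or_lt_of_le (Nat.one_le_iff_ne_zero.2 (by omega : m0 ≠ 0)) with h1 | h1
          · -- m0 = 1, z = x
            have : z = x := by rw [hz, ← h1]; rfl
            omega
          · -- m0 ≥ 2: minimality violated
            have : ¬ (0 < m0 - 1 ∧ parN n a e = (parN n a)^[m0 - 1] x) :=
              Nat.find_min hex (by omega)
            exact this ⟨by omega, by rw [← hz, hpez]⟩

lemma le_parN_of_root (hR : IsRook n a) (hT : ∀ i : Fin n, a i ≤ i.val + 1)
    {e x : ℕ} (hx : x < e) (hroot : rootN n a x = rootN n a e) : x ≤ parN n a e := by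
  obtain ⟨m, hm⟩ := chain_lemma hR hT e x (le_of_lt hx) hroot
  have hmpos : 0 < m := by
    rcases Nat.eq_zero_or_pos m with rfl | h
    · simp at hm; omega
    · exact h
  have : x = (parN n a)^[m - 1] (parN n a e) := by
    rw [← Function.iterate_succ_apply, Nat.succ_eq_add_one]
    have : m - 1 + 1 = m := by omega
    rw [this]; exact hm
  rw [this]
  exact iterate_le hT _ _
lemma no_below_of_fix (hR : IsRook n a) (hT : ∀ i : Fin n, a i ≤ i.val + 1)
    {e x : ℕ} (hfix : parN n a e = e) (hx : x < e) : rootN n a x ≠ rootN n a e := by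
  intro hroot
  obtain ⟨m, hm⟩ := chain_lemma hR hT e x (le_of_lt hx) hroot
  rw [iterate_fix hT hfix] at hm
  omega

/-! ### Finpartition from a "representative" function -/

variable {N : ℕ}

def cls (R : Fin N → Fin N) (x : Fin N) : Finset (Fin N) :=
  univ.filter (fun y => R y = R x)

lemma mem_cls {R : Fin N → Fin N} {x y : Fin N} : y ∈ cls R x ↔ R y = R x := by
  simp [cls]

lemma self_mem_cls {R : Fin N → Fin N} {x : Fin N} : x ∈ cls R x := mem_cls.2 rfl

lemma cls_eq_of_rel {R : Fin N → Fin N} {x y : Fin N} (h : R x = R y) : cls R x = cls R y := by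
  ext z; simp [mem_cls, h]

def ptn (R : Fin N → Fin N) : Finpartition (univ : Finset (Fin N)) where
  parts := univ.image (cls R)
  supIndep := by
    rw [Finset.supIndep_iff_pairwiseDisjoint]
    intro p hp q hq hpq
    simp only [Finset.coe_image, Set.mem_image] at hp hq
    obtain ⟨x, -, rfl⟩ := hp
    obtain ⟨y, -, rfl⟩ := hq
    show Disjoint (cls R x) (cls R y)
    rw [Finset.disjoint_left]
    intro z hzx hzy
    exact hpq (cls_eq_of_rel ((mem_cls.1 hzx).symm.trans (mem_cls.1 hzy)))
  sup_parts := by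
    apply le_antisymm
    · exact Finset.sup_le fun p _ => le_top
    · intro x _
      rw [Finset.mem_sup]
      exact ⟨cls R x, Finset.mem_image_of_mem _ (mem_univ x), self_mem_cls⟩
  bot_notMem := by
    simp only [Finset.bot_eq_empty, Finset.mem_image]
    rintro ⟨x, -, hx⟩
    exact absurd (hx ▸ self_mem_cls (R := R) (x := x)) (Finset.notMem_empty x)

lemma ptn_part (R : Fin N → Fin N) (x : Fin N) : (ptn R).part x = cls R x :=
  (ptn R).part_eq_of_mem (Finset.mem_image_of_mem _ (mem_univ x)) self_mem_cls

lemma ptn_parts_card (R : Fin N → Fin N) : (ptn R).parts.card = (univ.image R).card := by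
  have h1 : (ptn R).parts = (univ.image R).image
      (fun v => univ.filter (fun y => R y = v)) := by
    show univ.image (cls R) = _
    rw [Finset.image_image]
    rfl
  rw [h1]
  apply Finset.card_image_of_injOn
  intro v hv w hw hvw
  simp only [Finset.mem_coe, Finset.mem_image] at hv hw
  obtain ⟨x, -, rfl⟩ := hv
  have h2 : univ.filter (fun y => R y = R x) = univ.filter (fun y => R y = w) := hvw
  have : x ∈ univ.filter (fun y => R y = R x) := by simp
  rw [h2] at this
  exact (Finset.mem_filter.1 this).2

/-- parts of any finpartition of univ are the image of `part`. -/
lemma parts_eq_image_part (P : Finpartition (univ : Finset (Fin N))) :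
    P.parts = univ.image P.part := by
  ext p
  constructor
  · intro hp
    obtain ⟨x, hx⟩ := P.nonempty_of_mem_parts hp
    exact Finset.mem_image.2 ⟨x, mem_univ x, P.part_eq_of_mem hp hx⟩
  · rintro hp
    obtain ⟨x, -, rfl⟩ := Finset.mem_image.1 hp
    exact P.part_mem.2 (mem_univ x)

/-! ### From a rook to a partition -/

def Rfun (n : ℕ) (a : Fin n → ℕ) : Fin (n+1) → Fin (n+1) :=
  fun e => ⟨rootN n a e.val, lt_of_le_of_lt (rootN_le e.val) e.isLt⟩

lemma Rfun_val (e : Fin (n+1)) : (Rfun n a e).val = rootN n a e.val := rfl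

lemma Rfun_eq_self_iff (hT : ∀ i : Fin n, a i ≤ i.val + 1) (e : Fin (n+1)) :
    Rfun n a e = e ↔ parN n a e.val = e.val := by
  constructor
  · intro h
    exact fix_of_rootN hT (congrArg Fin.val h)
  · intro h
    exact Fin.ext (rootN_of_fix h)

lemma parN_lt_iff (hT : ∀ i : Fin n, a i ≤ i.val + 1) (e : ℕ) :
    parN n a e < e ↔ (0 < e ∧ aext n a (e-1) ≠ 0) := by
  constructor
  · intro h
    by_contra hc
    unfold parN at h
    rw [if_neg hc] at h
    omega
  · intro h
    have hle := parN_le hT e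
    rcases lt_or_eq_of_le hle with h' | h'
    · exact h'
    · exfalso
      unfold parN at h'
      rw [if_pos h] at h'
      obtain ⟨h0, hne⟩ := h
      unfold aext at hne h'
      split at hne
      · rename_i hlt
        rw [dif_pos hlt] at h'
        have := hT ⟨e-1, hlt⟩
        simp only [Fin.val_mk] at this
        omega
      · omega

lemma image_Rfun (hT : ∀ i : Fin n, a i ≤ i.val + 1) :
    univ.image (Rfun n a) = univ.filter (fun e => Rfun n a e = e) := by
  ext e
  simp only [Finset.mem_image, Finset.mem_filter, mem_univ, true_and]
  constructor
  · rintro ⟨x, -, rfl⟩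
    exact Fin.ext (rootN_idem hT x.val)
  · intro h
    exact ⟨e, h⟩

lemma nonfix_eq_image (hT : ∀ i : Fin n, a i ≤ i.val + 1) :
    univ.filter (fun e : Fin (n+1) => ¬ Rfun n a e = e)
      = (univ.filter (fun i : Fin n => a i ≠ 0)).image
          (fun i => (⟨i.val + 1, by omega⟩ : Fin (n+1))) := by
  ext e
  simp only [Finset.mem_filter, Finset.mem_image, mem_univ, true_and]
  rw [Rfun_eq_self_iff hT]
  have hpl := parN_le hT e.val
  have hiff : ¬ parN n a e.val = e.val ↔ (0 < e.val ∧ aext n a (e.val-1) ≠ 0) := by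
    rw [← parN_lt_iff hT]; omega
  rw [hiff]
  constructor
  · rintro ⟨h0, hne⟩
    have hlt : e.val - 1 < n := by
      by_contra hc
      exact hne (by unfold aext; rw [dif_neg hc])
    refine ⟨⟨e.val - 1, hlt⟩, fun hz => hne (by unfold aext; rw [dif_pos hlt]; exact hz), ?_⟩
    apply Fin.ext
    simp only [Fin.val_mk]
    omega
  · rintro ⟨i, hne, rfl⟩
    simp only [Fin.val_mk]
    refine ⟨by omega, ?_⟩
    have hlt : i.val + 1 - 1 < n := by omega
    unfold aext
    rw [dif_pos hlt]
    have : (⟨i.val + 1 - 1, hlt⟩ : Fin n) = i := by apply Fin.ext; simp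
    rw [this]
    exact hne

lemma card_fix (hT : ∀ i : Fin n, a i ≤ i.val + 1) :
    (univ.filter (fun e : Fin (n+1) => Rfun n a e = e)).card = n + 1 - rookRank n a := by
  have hrank : (univ.filter (fun e : Fin (n+1) => ¬ Rfun n a e = e)).card = rookRank n a := by
    rw [nonfix_eq_image hT, Finset.card_image_of_injective]
    · rfl
    · intro i j hij
      have := congrArg Fin.val hij
      simp only [Fin.val_mk] at this
      exact Fin.ext (by omega)
  have := Finset.card_filter_add_card_filter_not
    (s := (univ : Finset (Fin (n+1)))) (p := fun e => Rfun n a e = e)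
  rw [Finset.card_univ, Fintype.card_fin] at this
  have hle : rookRank n a ≤ n := by
    unfold rookRank
    calc (univ.filter (fun i : Fin n => a i ≠ 0)).card ≤ (univ : Finset (Fin n)).card :=
          Finset.card_filter_le _ _
      _ = n := by rw [Finset.card_univ, Fintype.card_fin]
  omega

/-! ### From a partition to a rook -/

def invRook (n : ℕ) (P : Finpartition (univ : Finset (Fin (n+1)))) : Fin n → ℕ :=
  fun i =>
    if h : ((P.part ⟨i.val+1, by omega⟩).filter (fun y => y.val < i.val + 1)).Nonempty
    then (((P.part ⟨i.val+1, by omega⟩).filter (fun y => y.val < i.val + 1)).max' h).val + 1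
    else 0

lemma invRook_triangular (P : Finpartition (univ : Finset (Fin (n+1)))) (i : Fin n) :
    invRook n P i ≤ i.val + 1 := by
  unfold invRook
  split
  · rename_i h
    have := Finset.max'_mem _ h
    rw [Finset.mem_filter] at this
    omega
  · omega

lemma invRook_isRook (P : Finpartition (univ : Finset (Fin (n+1)))) : IsRook n (invRook n P) := by
  constructor
  · intro i
    have := invRook_triangular P i
    omega
  · intro i j hne heq
    by_contra hij
    -- setup for both indices
    have key : ∀ i : Fin n, invRook n P i ≠ 0 →
        ∃ h : ((P.part ⟨i.val+1, by omega⟩).filter (fun y => y.val < i.val + 1)).Nonempty,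
          invRook n P i = (((P.part ⟨i.val+1, by omega⟩).filter
            (fun y => y.val < i.val + 1)).max' h).val + 1 := by
      intro i hi
      unfold invRook at hi ⊢
      split at hi
      · rename_i h; exact ⟨h, dif_pos h⟩
      · exact absurd rfl hi
    obtain ⟨hi, hieq⟩ := key i hne
    obtain ⟨hj, hjeq⟩ := key j (by rw [← heq]; exact hne)
    set mi := _root_.Finset.max' _ hi with hmi
    set mj := _root_.Finset.max' _ hj with hmj
    have hm : mi = mj := by
      apply Fin.ext
      have : mi.val + 1 = mj.val + 1 := by rw [← hieq, ← hjeq, heq]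
      omega
    have hmiP : mi ∈ P.part ⟨i.val+1, by omega⟩ ∧ mi.val < i.val + 1 := by
      have := Finset.max'_mem _ hi
      rw [Finset.mem_filter] at this
      exact ⟨this.1, this.2⟩
    have hmjP : mj ∈ P.part ⟨j.val+1, by omega⟩ ∧ mj.val < j.val + 1 := by
      have := Finset.max'_mem _ hj
      rw [Finset.mem_filter] at this
      exact ⟨this.1, this.2⟩
    have hparts : P.part (⟨i.val+1, by omega⟩ : Fin (n+1)) = P.part ⟨j.val+1, by omega⟩ := by
      apply P.eq_of_mem_parts (P.part_mem.2 (mem_univ _)) (P.part_mem.2 (mem_univ _)) hmiP.1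
      rw [hm]; exact hmjP.1
    -- wlog i < j
    have main : ∀ i j : Fin n, i.val < j.val →
        P.part (⟨i.val+1, by omega⟩ : Fin (n+1)) = P.part ⟨j.val+1, by omega⟩ →
        ∀ (hj : ((P.part ⟨j.val+1, by omega⟩).filter (fun y => y.val < j.val + 1)).Nonempty),
        i.val + 1 ≤ (_root_.Finset.max' _ hj).val := by
      intro i j hlt hpp hjne
      have hmem : (⟨i.val+1, by omega⟩ : Fin (n+1)) ∈
          (P.part ⟨j.val+1, by omega⟩).filter (fun y => y.val < j.val + 1) := by
        rw [Finset.mem_filter]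
        constructor
        · rw [← hpp]
          exact P.mem_part (mem_univ _)
        · simp only [Fin.val_mk]; omega
      have h7 := Finset.le_max' _ _ hmem
      rw [Fin.le_def] at h7
      exact h7
    rcases lt_trichotomy i.val j.val with h | h | h
    · have := main i j h hparts hj
      rw [← hmj, ← hm] at this
      omega
    · exact hij (Fin.ext h)
    · have := main j i h hparts.symm hi
      rw [← hmi, hm] at this
      omega

/-- the set of block-minima has the same cardinality as the set of parts. -/
lemma card_minima (P : Finpartition (univ : Finset (Fin (n+1)))) :
    (univ.filter (fun e : Fin (n+1) => ∀ y ∈ P.part e, e ≤ y)).card = P.parts.card := by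
  symm
  apply Finset.card_bij (fun p hp => p.min' (P.nonempty_of_mem_parts hp))
  · intro p hp
    rw [Finset.mem_filter]
    refine ⟨mem_univ _, ?_⟩
    intro y hy
    have hpart : P.part (p.min' (P.nonempty_of_mem_parts hp)) = p :=
      P.part_eq_of_mem hp (Finset.min'_mem _ _)
    rw [hpart] at hy
    exact Finset.min'_le _ _ hy
  · intro p hp q hq hpq
    exact P.eq_of_mem_parts hp hq (hpq ▸ Finset.min'_mem _ _) (Finset.min'_mem _ _)
  · intro e he
    rw [Finset.mem_filter] at he
    refine ⟨P.part e, P.part_mem.2 (mem_univ _), ?_⟩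
    apply le_antisymm
    · exact Finset.min'_le _ _ (P.mem_part (mem_univ _))
    · exact he.2 _ (Finset.min'_mem _ _)

lemma invRook_nonfix_eq_image (P : Finpartition (univ : Finset (Fin (n+1)))) :
    univ.filter (fun e : Fin (n+1) => ¬ ∀ y ∈ P.part e, e ≤ y)
      = (univ.filter (fun i : Fin n => invRook n P i ≠ 0)).image
          (fun i => (⟨i.val + 1, by omega⟩ : Fin (n+1))) := by
  ext e
  simp only [Finset.mem_filter, Finset.mem_image, mem_univ, true_and, not_forall]
  constructor
  · rintro ⟨y, hy, hye⟩
    rw [not_le] at hye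
    have h0 : 0 < e.val := lt_of_le_of_lt (Nat.zero_le _) hye
    have hlt : e.val - 1 < n := by omega
    refine ⟨⟨e.val - 1, hlt⟩, ?_, Fin.ext (by simp only [Fin.val_mk]; omega)⟩
    unfold invRook
    have hee : (⟨(e.val - 1) + 1, by omega⟩ : Fin (n+1)) = e := Fin.ext (by simp; omega)
    rw [dif_pos]
    · simp
    · refine ⟨y, ?_⟩
      rw [Finset.mem_filter]
      simp only [Fin.val_mk]
      rw [hee]
      exact ⟨hy, by omega⟩
  · rintro ⟨i, hi, rfl⟩
    unfold invRook at hi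
    split at hi
    · rename_i hS
      obtain ⟨y, hy⟩ := hS
      rw [Finset.mem_filter] at hy
      exact ⟨y, hy.1, by rw [not_le, Fin.lt_def]; simpa using hy.2⟩
    · exact absurd rfl hi

lemma invRook_rank (P : Finpartition (univ : Finset (Fin (n+1)))) :
    rookRank n (invRook n P) = n + 1 - P.parts.card := by
  have h1 : (univ.filter (fun e : Fin (n+1) => ¬ ∀ y ∈ P.part e, e ≤ y)).card
      = rookRank n (invRook n P) := by
    rw [invRook_nonfix_eq_image, Finset.card_image_of_injective]
    · rfl
    · intro i j hij
      have := congrArg Fin.val hij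
      simp only [Fin.val_mk] at this
      exact Fin.ext (by omega)
  have h2 := card_minima P
  have := Finset.card_filter_add_card_filter_not
    (s := (univ : Finset (Fin (n+1)))) (p := fun e : Fin (n+1) => ∀ y ∈ P.part e, e ≤ y)
  rw [Finset.card_univ, Fintype.card_fin] at this
  omega

lemma left_inv (hR : IsRook n a) (hT : ∀ i : Fin n, a i ≤ i.val + 1) :
    invRook n (ptn (Rfun n a)) = a := by
  funext i
  set P := ptn (Rfun n a) with hP
  set e : Fin (n+1) := ⟨i.val + 1, by omega⟩ with he
  have hpart : P.part e = cls (Rfun n a) e := ptn_part _ _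
  have haext : aext n a (e.val - 1) = a i := by
    have hlt : e.val - 1 < n := by simp [he]
    have hfin : (⟨e.val - 1, hlt⟩ : Fin n) = i := Fin.ext (by simp [he])
    unfold aext
    rw [dif_pos hlt, hfin]
  by_cases ha : a i = 0
  · -- the filter set is empty
    have hfix : parN n a e.val = e.val := by
      unfold parN
      rw [if_neg]
      push_neg
      intro _
      rw [haext, ha]
    have hempty : ¬ ((P.part e).filter (fun y => y.val < i.val + 1)).Nonempty := by
      rintro ⟨y, hy⟩
      rw [hpart, Finset.mem_filter, mem_cls] at hy
      have hroot : rootN n a y.val = rootN n a e.val := congrArg Fin.val hy.1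
      have hlt : y.val < e.val := by rw [he]; simpa using hy.2
      exact no_below_of_fix hR hT hfix hlt hroot
    unfold invRook
    rw [dif_neg]
    · rw [ha]
    · exact hempty
  · have hplt : parN n a e.val = a i - 1 := by
      unfold parN
      rw [if_pos]
      · rw [haext]
      · rw [haext]; constructor
        · rw [he]; simp
        · exact ha
    set p : Fin (n+1) := ⟨a i - 1, by have := hT i; omega⟩ with hp
    have hpv : p.val = parN n a e.val := by rw [hp, hplt]
    have hplt' : parN n a e.val < e.val := by
      have := hT i
      rw [hplt, he]
      simp only [Fin.val_mk]
      omega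
    have hpmem : p ∈ (P.part e).filter (fun y => y.val < i.val + 1) := by
      rw [hpart, Finset.mem_filter, mem_cls]
      constructor
      · apply Fin.ext
        rw [Rfun_val, Rfun_val, hpv, rootN_parN hT]
      · rw [hp]; have := hT i; simp only [Fin.val_mk]; omega
    have hne : ((P.part e).filter (fun y => y.val < i.val + 1)).Nonempty := ⟨p, hpmem⟩
    have hmax : ((P.part e).filter (fun y => y.val < i.val + 1)).max' hne = p := by
      apply le_antisymm
      · apply Finset.max'_le
        intro y hy
        rw [hpart, Finset.mem_filter, mem_cls] at hy
        have hroot : rootN n a y.val = rootN n a e.val := congrArg Fin.val hy.1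
        have hlt : y.val < e.val := by rw [he]; simpa using hy.2
        have := le_parN_of_root hR hT hlt hroot
        rw [Fin.le_def, hpv]
        exact this
      · exact Finset.le_max' _ _ hpmem
    unfold invRook
    rw [dif_pos hne]
    have : ((P.part e).filter (fun y => y.val < i.val + 1)).max'
        (by exact hne) = p := hmax
    rw [this, hp]
    simp only [Fin.val_mk]
    omega

lemma root_eq_min (P : Finpartition (univ : Finset (Fin (n+1)))) :
    ∀ (e : Fin (n+1)), rootN n (invRook n P) e.val
      = ((P.part e).min' ⟨e, P.mem_part (mem_univ e)⟩).val := by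
  set a := invRook n P with haP
  suffices H : ∀ v : ℕ, ∀ e : Fin (n+1), e.val = v →
      rootN n a e.val = ((P.part e).min' ⟨e, P.mem_part (mem_univ e)⟩).val by
    exact fun e => H e.val e rfl
  intro v
  induction v using Nat.strong_induction_on with
  | _ v ih =>
  intro e hv
  subst hv
  have hTa : ∀ i : Fin n, a i ≤ i.val + 1 := fun i => invRook_triangular P i
  by_cases hS : ((P.part e).filter (fun y => y.val < e.val)).Nonempty
  · -- e is not the minimum of its block
    obtain ⟨y0, hy0⟩ := hS
    rw [Finset.mem_filter] at hy0
    have h0 : 0 < e.val := lt_of_le_of_lt (Nat.zero_le _) hy0.2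
    have hlt : e.val - 1 < n := by omega
    set i : Fin n := ⟨e.val - 1, hlt⟩ with hi
    have hv' : i.val + 1 = e.val := by simp [hi]; omega
    have hie : (⟨i.val + 1, by omega⟩ : Fin (n+1)) = e := Fin.ext hv'
    have hset : (P.part (⟨i.val + 1, by omega⟩ : Fin (n+1))).filter
        (fun y => y.val < i.val + 1) = (P.part e).filter (fun y => y.val < e.val) := by
      rw [hie, hv']
    have hSn : ((P.part (⟨i.val + 1, by omega⟩ : Fin (n+1))).filter
        (fun y => y.val < i.val + 1)).Nonempty := by
      rw [hset]
      exact ⟨y0, Finset.mem_filter.2 hy0⟩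
    set m := (((P.part (⟨i.val + 1, by omega⟩ : Fin (n+1))).filter
        (fun y => y.val < i.val + 1)).max' hSn) with hm
    have hai : a i = m.val + 1 := by
      rw [haP]
      unfold invRook
      rw [dif_pos hSn]
    have hmmem : m ∈ (P.part e).filter (fun y => y.val < e.val) := by
      rw [← hset]; exact Finset.max'_mem _ hSn
    rw [Finset.mem_filter] at hmmem
    have hpar : parN n a e.val = m.val := by
      unfold parN
      have haex : aext n a (e.val - 1) = a i := by
        unfold aext
        rw [dif_pos hlt]
      rw [if_pos ⟨h0, by rw [haex, hai]; omega⟩, haex, hai]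
      omega
    have hroot : rootN n a e.val = rootN n a m.val := by
      rw [← hpar, rootN_parN hTa]
    rw [hroot, ih m.val hmmem.2 m rfl]
    have hpm : P.part m = P.part e :=
      (P.mem_part_iff_part_eq_part (mem_univ m) (mem_univ e)).1 hmmem.1
    congr 1
    apply le_antisymm
    · exact Finset.min'_le _ _ (by rw [hpm]; exact Finset.min'_mem _ _)
    · exact Finset.min'_le _ _ (by rw [← hpm]; exact Finset.min'_mem _ _)
  · -- e is the minimum of its block
    have hfix : parN n a e.val = e.val := by
      unfold parN
      rw [if_neg]
      rintro ⟨h0, hne⟩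
      have hlt : e.val - 1 < n := by omega
      set i : Fin n := ⟨e.val - 1, hlt⟩ with hi
      have hv' : i.val + 1 = e.val := by simp [hi]; omega
      have hie : (⟨i.val + 1, by omega⟩ : Fin (n+1)) = e := Fin.ext hv'
      have hset : (P.part (⟨i.val + 1, by omega⟩ : Fin (n+1))).filter
          (fun y => y.val < i.val + 1) = (P.part e).filter (fun y => y.val < e.val) := by
        rw [hie, hv']
      have haex : aext n a (e.val - 1) = a i := by
        unfold aext
        rw [dif_pos hlt]
      rw [haex] at hne
      apply hne
      rw [haP]
      unfold invRook
      rw [dif_neg]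
      rw [hset]
      exact hS
    rw [rootN_of_fix hfix]
    have hmin := Finset.min'_mem (P.part e) ⟨e, P.mem_part (mem_univ e)⟩
    have h1 : ((P.part e).min' ⟨e, P.mem_part (mem_univ e)⟩) ≤ e :=
      Finset.min'_le _ _ (P.mem_part (mem_univ e))
    rcases lt_or_eq_of_le h1 with h2 | h2
    · exfalso
      exact hS ⟨_, Finset.mem_filter.2 ⟨hmin, h2⟩⟩
    · rw [h2]

lemma right_inv (P : Finpartition (univ : Finset (Fin (n+1)))) :
    ptn (Rfun n (invRook n P)) = P := by
  set a := invRook n P with haP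
  have hcls : ∀ x : Fin (n+1), cls (Rfun n a) x = P.part x := by
    intro x
    ext y
    rw [mem_cls]
    have hmin : ∀ z : Fin (n+1), (Rfun n a z).val
        = ((P.part z).min' ⟨z, P.mem_part (mem_univ z)⟩).val := by
      intro z
      rw [Rfun_val]
      exact root_eq_min P z
    constructor
    · intro h
      have hval : ((P.part y).min' ⟨y, P.mem_part (mem_univ y)⟩)
          = ((P.part x).min' ⟨x, P.mem_part (mem_univ x)⟩) := by
        apply Fin.ext
        rw [← hmin y, ← hmin x, h]
      have hy : P.part ((P.part y).min' ⟨y, P.mem_part (mem_univ y)⟩) = P.part y :=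
        P.part_eq_of_mem (P.part_mem.2 (mem_univ y)) (Finset.min'_mem _ _)
      have hx : P.part ((P.part x).min' ⟨x, P.mem_part (mem_univ x)⟩) = P.part x :=
        P.part_eq_of_mem (P.part_mem.2 (mem_univ x)) (Finset.min'_mem _ _)
      have : P.part y = P.part x := by rw [← hy, ← hx, hval]
      rw [← this]
      exact P.mem_part (mem_univ y)
    · intro h
      have hpp : P.part y = P.part x :=
        (P.mem_part_iff_part_eq_part (mem_univ y) (mem_univ x)).1 h
      apply Fin.ext
      rw [hmin y, hmin x]
      congr 1
      apply le_antisymm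
      · exact Finset.min'_le _ _ (by rw [hpp]; exact Finset.min'_mem _ _)
      · exact Finset.min'_le _ _ (by rw [← hpp]; exact Finset.min'_mem _ _)
  apply Finpartition.ext
  show univ.image (cls (Rfun n a)) = P.parts
  rw [parts_eq_image_part P]
  apply Finset.image_congr
  intro x _
  exact hcls x

end Stmt10

/-- for `0 ≤ k ≤ n`, the number of upper triangular `n`-rooks of
rank `k` equals the Stirling number of the second kind `S(n+1, n+1−k)`, i.e.
the number of set partitions of `{1,…,n+1}` into exactly `n+1−k` blocks. -/
theorem stmt10 (n k : ℕ) (hk : k ≤ n) :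
    Nat.card {a : Fin n → ℕ //
        IsRook n a ∧ (∀ i : Fin n, a i ≤ i.val + 1) ∧ rookRank n a = k}
      = Nat.card {P : Finpartition (Finset.univ : Finset (Fin (n + 1))) //
          P.parts.card = n + 1 - k} := by
  apply Nat.card_congr
  refine
    { toFun := fun x => ⟨Stmt10.ptn (Stmt10.Rfun n x.val), ?_⟩
      invFun := fun P => ⟨Stmt10.invRook n P.val,
        Stmt10.invRook_isRook P.val, Stmt10.invRook_triangular P.val, ?_⟩
      left_inv := ?_
      right_inv := ?_ }
  · obtain ⟨a, hR, hT, hrank⟩ := x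
    rw [Stmt10.ptn_parts_card, Stmt10.image_Rfun hT, Stmt10.card_fix hT, hrank]
  · obtain ⟨P, hP⟩ := P
    rw [Stmt10.invRook_rank, hP]
    omega
  · rintro ⟨a, hR, hT, hrank⟩
    apply Subtype.ext
    exact Stmt10.left_inv hR hT
  · rintro ⟨P, hP⟩
    apply Subtype.ext
    exact Stmt10.right_inv P
end

section
/- For every n ≥ 1, the map ψ sending x to the set of its fixed points ψ(x) = {i ∈ {1,…,n} : x(i) = i} is an order isomorphism from the poset P_{n,n−1} (upper triangular n-rooks of rank n−1 under the Bruhat–Chevalley–Renner order) onto the poset of all subsets of {1,…,n} other than the full set {1,…,n}, ordered by inclusion; that is, ψ is a bijection onto the proper subsets and, for x, y ∈ P_{n,n−1}, x ≤ y if and only if ψ(x) ⊆ ψ(y). -/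
open scoped Classical

/-- The fixed-point set `ψ(x) = {i : x(i) = i}` (0-based: `x i = i + 1`). -/
def psiFix (n : ℕ) (x : Fin n → ℕ) : Finset (Fin n) :=
  Finset.univ.filter (fun i => x i = i.val + 1)

namespace Stmt11Aux

noncomputable def canon (n : ℕ) (T : Finset (Fin n)) (i : Fin n) : ℕ :=
  if i ∈ T then (T.filter (fun t => t < i)).sup (fun t => t.val + 1) else i.val + 1

variable {n : ℕ} {T : Finset (Fin n)} {i p s : Fin n}

lemma canon_not_mem (h : i ∉ T) : canon n T i = i.val + 1 := if_neg h

lemma canon_mem (h : i ∈ T) :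
    canon n T i = (T.filter (fun t => t < i)).sup (fun t => t.val + 1) := if_pos h

lemma canon_mem_le (h : i ∈ T) : canon n T i ≤ i.val := by
  rw [canon_mem h]
  refine Finset.sup_le fun t ht => ?_
  rw [Finset.mem_filter] at ht
  exact ht.2

lemma canon_le (T : Finset (Fin n)) (i : Fin n) : canon n T i ≤ i.val + 1 := by
  by_cases h : i ∈ T
  · exact (canon_mem_le h).trans (Nat.le_succ _)
  · rw [canon_not_mem h]

lemma canon_eq_of (hi : i ∈ T) (hp : p ∈ T) (hpi : p < i)
    (hmax : ∀ u ∈ T, u < i → u ≤ p) : canon n T i = p.val + 1 := by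
  rw [canon_mem hi]
  have hmem : p ∈ T.filter (fun t => t < i) := Finset.mem_filter.mpr ⟨hp, hpi⟩
  refine le_antisymm (Finset.sup_le fun t ht => ?_)
    (Finset.le_sup (f := fun t : Fin n => t.val + 1) hmem)
  rw [Finset.mem_filter] at ht
  exact Nat.succ_le_succ (hmax t ht.1 ht.2)

lemma canon_eq_zero (hi : i ∈ T) (h : ∀ u ∈ T, ¬u < i) : canon n T i = 0 := by
  rw [canon_mem hi]
  refine Nat.le_zero.mp (Finset.sup_le fun t ht => ?_)
  rw [Finset.mem_filter] at ht
  exact absurd ht.2 (h t ht.1)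

lemma canon_ne_zero (hi : i ∈ T) (hp : p ∈ T) (hpi : p < i) : canon n T i ≠ 0 := by
  have hmem : p ∈ T.filter (fun t => t < i) := Finset.mem_filter.mpr ⟨hp, hpi⟩
  have h2 : (fun t : Fin n => t.val + 1) p ≤ (T.filter (fun t => t < i)).sup (fun t => t.val + 1) :=
    Finset.le_sup (f := fun t : Fin n => t.val + 1) hmem
  rw [canon_mem hi]
  simp only at h2
  omega

/-- If `i ∈ T` and `canon n T i ≠ 0`, it equals `p+1` for the predecessor `p` of `i` in `T`. -/
lemma canon_spec (hi : i ∈ T) (hne : canon n T i ≠ 0) :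
    ∃ p, p ∈ T ∧ p < i ∧ canon n T i = p.val + 1 ∧ ∀ u ∈ T, u < i → u ≤ p := by
  have hfne : (T.filter (fun t => t < i)).Nonempty := by
    by_contra h
    rw [Finset.not_nonempty_iff_eq_empty] at h
    rw [canon_mem hi, h, Finset.sup_empty] at hne
    exact hne rfl
  have hmm : (T.filter (fun t => t < i)).max' hfne ∈ T.filter (fun t => t < i) :=
    Finset.max'_mem _ hfne
  rw [Finset.mem_filter] at hmm
  have hle : ∀ u ∈ T, u < i → u ≤ (T.filter (fun t => t < i)).max' hfne := by
    intro u hu hui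
    have hmem : u ∈ T.filter (fun t => t < i) := Finset.mem_filter.mpr ⟨hu, hui⟩
    exact Finset.le_max' _ u hmem
  exact ⟨_, hmm.1, hmm.2, canon_eq_of hi hmm.1 hmm.2 hle, hle⟩

lemma canon_isRook (T : Finset (Fin n)) : IsRook n (canon n T) := by
  constructor
  · intro i
    have h1 := canon_le T i
    have h2 := i.isLt
    omega
  · intro i j hne heq
    by_cases hi : i ∈ T <;> by_cases hj : j ∈ T
    · obtain ⟨p, hpT, hpi, hpe, hpm⟩ := canon_spec hi hne
      obtain ⟨q, hqT, hqj, hqe, hqm⟩ := canon_spec hj (heq ▸ hne)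
      have hpq : p = q := Fin.ext (by rw [hpe, hqe] at heq; omega)
      rcases lt_trichotomy i j with h | h | h
      · exact absurd (lt_of_le_of_lt (hpq ▸ hqm i hi h) hpi) (lt_irrefl i)
      · exact h
      · exact absurd (lt_of_le_of_lt (hpq ▸ hpm j hj h) hqj) (lt_irrefl j)
    · obtain ⟨p, hpT, hpi, hpe, _⟩ := canon_spec hi hne
      rw [hpe, canon_not_mem hj] at heq
      exact absurd ((Fin.ext (by omega) : p = j) ▸ hpT) hj
    · obtain ⟨q, hqT, hqj, hqe, _⟩ := canon_spec hj (heq ▸ hne)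
      rw [canon_not_mem hi, hqe] at heq
      exact absurd ((Fin.ext (by omega) : i = q) ▸ hqT) hi
    · rw [canon_not_mem hi, canon_not_mem hj] at heq
      exact Fin.ext (by omega)

lemma canon_rank (hT : T.Nonempty) : rookRank n (canon n T) = n - 1 := by
  have hv := T.min'_mem hT
  have key : Finset.univ.filter (fun i => canon n T i ≠ 0) = Finset.univ.erase (T.min' hT) := by
    ext i
    simp only [Finset.mem_filter, Finset.mem_univ, true_and, Finset.mem_erase, and_true]
    constructor
    · rintro h rfl
      exact h (canon_eq_zero hv fun u hu hlt => absurd (T.min'_le u hu) (not_le.mpr hlt))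
    · intro h
      by_cases hiT : i ∈ T
      · exact canon_ne_zero hiT hv (lt_of_le_of_ne (T.min'_le i hiT) (Ne.symm h))
      · rw [canon_not_mem hiT]; omega
  rw [rookRank, key, Finset.card_erase_of_mem (Finset.mem_univ _), Finset.card_univ,
    Fintype.card_fin]

lemma psiFix_canon (T : Finset (Fin n)) : psiFix n (canon n T) = Tᶜ := by
  ext i
  simp only [psiFix, Finset.mem_filter, Finset.mem_univ, true_and, Finset.mem_compl]
  constructor
  · intro h hiT
    have := canon_mem_le hiT
    omega
  · intro h
    exact canon_not_mem h


theorem eq_canon {n : ℕ} (hn : 1 ≤ n) {x : Fin n → ℕ} (hx : IsRook n x)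
    (hup : ∀ i, x i ≤ i.val + 1) (hrk : rookRank n x = n - 1) :
    x = canon n (Finset.univ.filter (fun i => x i ≠ i.val + 1)) := by
  set T := Finset.univ.filter (fun i => x i ≠ i.val + 1) with hT
  have hmemT : ∀ i : Fin n, i ∈ T ↔ x i ≠ i.val + 1 := by
    intro i; rw [hT, Finset.mem_filter]; simp
  -- the unique vacant position
  have hcard : (Finset.univ.filter (fun i => x i = 0)).card = 1 := by
    have h1 := Finset.card_filter_add_card_filter_not
      (s := (Finset.univ : Finset (Fin n))) (p := fun i => x i = 0)
    rw [Finset.card_univ, Fintype.card_fin] at h1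
    have h2 : (Finset.univ.filter (fun i => ¬x i = 0)).card = n - 1 := hrk
    omega
  obtain ⟨v, hv⟩ := Finset.card_eq_one.mp hcard
  have hxv : x v = 0 := by
    have : v ∈ Finset.univ.filter (fun i => x i = 0) := hv ▸ Finset.mem_singleton_self v
    exact (Finset.mem_filter.mp this).2
  have hzero : ∀ i, x i = 0 → i = v := by
    intro i hi
    have : i ∈ Finset.univ.filter (fun j => x j = 0) :=
      Finset.mem_filter.mpr ⟨Finset.mem_univ i, hi⟩
    rw [hv, Finset.mem_singleton] at this
    exact this
  have hvT : v ∈ T := (hmemT v).mpr (by omega)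
  -- every non-vacant non-fixed entry points to a smaller element of T
  have hstep : ∀ i, i ∈ T → i ≠ v → ∃ j, j ∈ T ∧ j < i ∧ x i = j.val + 1 := by
    intro i hiT hiv
    have h1 : x i ≠ i.val + 1 := (hmemT i).mp hiT
    have h2 : x i ≤ i.val := by have := hup i; omega
    have h3 : x i ≠ 0 := fun h => hiv (hzero i h)
    have hjlt : x i - 1 < n := by have := i.isLt; omega
    have hval : (⟨x i - 1, hjlt⟩ : Fin n).val = x i - 1 := rfl
    refine ⟨⟨x i - 1, hjlt⟩, ?_, ?_, by rw [hval]; omega⟩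
    · rw [hmemT, hval]
      intro hfix
      have hxj : x ⟨x i - 1, hjlt⟩ = x i := by omega
      have := hx.2 i ⟨x i - 1, hjlt⟩ h3 hxj.symm
      rw [← this] at hxj
      omega
    · rw [Fin.lt_def, hval]
      omega
  -- v is the minimum of T
  have hTne : T.Nonempty := ⟨v, hvT⟩
  have hvmin : ∀ i ∈ T, v ≤ i := by
    have hm := T.min'_mem hTne
    by_cases h : T.min' hTne = v
    · intro i hi; rw [← h]; exact T.min'_le i hi
    · obtain ⟨j, hjT, hjlt, _⟩ := hstep _ hm h
      exact absurd (T.min'_le j hjT) (not_le.mpr hjlt)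
  -- the bijection/surjectivity argument
  have hsurj : ∀ i, i ∈ T → ∀ p ∈ T.filter (fun t => t < i),
      ∃ a ∈ (T.filter (fun t => t ≤ i)).erase v, x a = p.val + 1 := by
    intro i hiT p hp
    set D := (T.filter (fun t => t ≤ i)).erase v with hD
    set C := T.filter (fun t => t < i) with hC
    have hDmem : ∀ a, a ∈ D ↔ a ∈ T ∧ a ≤ i ∧ a ≠ v := by
      intro a; rw [hD, Finset.mem_erase, Finset.mem_filter]; tauto
    have hCmem : ∀ a, a ∈ C ↔ a ∈ T ∧ a < i := by
      intro a; rw [hC, Finset.mem_filter]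
    -- map
    have hf : ∀ a ∈ D, ∃ j, j ∈ C ∧ x a = j.val + 1 := by
      intro a ha
      rw [hDmem] at ha
      obtain ⟨j, hjT, hjlt, hje⟩ := hstep a ha.1 ha.2.2
      exact ⟨j, (hCmem j).mpr ⟨hjT, lt_of_lt_of_le hjlt ha.2.1⟩, hje⟩
    -- cards
    have hvD' : v ∈ T.filter (fun t => t ≤ i) :=
      Finset.mem_filter.mpr ⟨hvT, hvmin i hiT⟩
    have hiD' : i ∈ T.filter (fun t => t ≤ i) := Finset.mem_filter.mpr ⟨hiT, le_refl i⟩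
    have hcard1 : D.card = (T.filter (fun t => t ≤ i)).card - 1 :=
      Finset.card_erase_of_mem hvD'
    have hsplit : T.filter (fun t => t ≤ i) = insert i C := by
      ext a
      rw [Finset.mem_insert, hCmem, Finset.mem_filter]
      constructor
      · rintro ⟨haT, hale⟩
        rcases eq_or_lt_of_le hale with h | h
        · exact Or.inl h
        · exact Or.inr ⟨haT, h⟩
      · rintro (rfl | ⟨haT, halt⟩)
        · exact ⟨hiT, le_refl _⟩
        · exact ⟨haT, le_of_lt halt⟩
    have hiC : i ∉ C := by rw [hCmem]; simp
    have hcard2 : (T.filter (fun t => t ≤ i)).card = C.card + 1 := by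
      rw [hsplit, Finset.card_insert_of_notMem hiC]
    have hcardle : C.card ≤ D.card := by
      have h0 : 0 < (T.filter (fun t => t ≤ i)).card := Finset.card_pos.mpr ⟨v, hvD'⟩
      omega
    -- choose the function
    classical
    choose g hg1 hg2 using hf
    have := Finset.surj_on_of_inj_on_of_card_le (s := D) (t := C) g hg1
      (fun a₁ a₂ ha₁ ha₂ heq => ?_) hcardle p hp
    · obtain ⟨a, ha, hpa⟩ := this
      refine ⟨a, ha, ?_⟩
      rw [hg2 a ha, ← hpa]
    · -- injectivity
      have e1 := hg2 a₁ ha₁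
      have e2 := hg2 a₂ ha₂
      have hne1 : x a₁ ≠ 0 := by rw [e1]; omega
      apply hx.2 a₁ a₂ hne1
      rw [e1, e2, heq]
  -- conclude
  funext i
  by_cases hiT : i ∈ T
  · by_cases hiv : i = v
    · subst hiv
      rw [hxv, canon_eq_zero hvT]
      intro u hu
      exact not_lt.mpr (hvmin u hu)
    · -- i ∈ T, i ≠ v : x i = pred + 1 = canon
      have hvlt : v < i := lt_of_le_of_ne (hvmin i hiT) (Ne.symm hiv)
      have hCne : (T.filter (fun t => t < i)).Nonempty :=
        ⟨v, Finset.mem_filter.mpr ⟨hvT, hvlt⟩⟩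
      set p := (T.filter (fun t => t < i)).max' hCne with hp
      have hpmem : p ∈ T.filter (fun t => t < i) := Finset.max'_mem _ hCne
      have hpmem' := Finset.mem_filter.mp hpmem
      have hple : ∀ u ∈ T, u < i → u ≤ p := by
        intro u hu hui
        have : u ∈ T.filter (fun t => t < i) := Finset.mem_filter.mpr ⟨hu, hui⟩
        exact Finset.le_max' _ u this
      have hcanon : canon n T i = p.val + 1 := canon_eq_of hiT hpmem'.1 hpmem'.2 hple
      obtain ⟨a, ha, hxa⟩ := hsurj i hiT p hpmem
      rw [Finset.mem_erase, Finset.mem_filter] at ha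
      have haT := ha.2.1
      have hai : a ≤ i := ha.2.2
      have hpa : p < a := by
        have h1 : x a ≤ a.val := by
          have h2 := (hmemT a).mp haT
          have := hup a
          omega
        rw [Fin.lt_def]; omega
      have : a = i := by
        rcases eq_or_lt_of_le hai with h | h
        · exact h
        · exact absurd (hple a haT h) (not_le.mpr hpa)
      rw [this] at hxa
      rw [hxa, hcanon]
  · rw [canon_not_mem hiT]
    have := (hmemT i).not.mp hiT  -- ¬ (x i ≠ i+1)
    omega


/-- The rank-matrix count: number of `k ≤ i` with `a k ≥ j`. -/
noncomputable def Fcnt (n : ℕ) (a : Fin n → ℕ) (i : Fin n) (j : ℕ) : ℕ :=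
  (Finset.univ.filter (fun k => k ≤ i ∧ j ≤ a k)).card

lemma step_mono {n : ℕ} {a b : Fin n → ℕ} (h : BCRStep n a b) (i : Fin n) (j : ℕ) :
    Fcnt n a i j ≤ Fcnt n b i j := by
  obtain ⟨-, -, h | h⟩ := h
  · obtain ⟨i0, hlt, heq⟩ := h
    apply Finset.card_le_card
    intro k hk
    rw [Finset.mem_filter] at hk ⊢
    refine ⟨hk.1, hk.2.1, ?_⟩
    by_cases hki : k = i0
    · subst hki; omega
    · rw [← heq k hki]; exact hk.2.2
  · obtain ⟨i0, j0, hij, hb1, hb2, hbb, heq⟩ := h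
    rcases le_or_gt j0 i with hc | hc
    · -- both positions ≤ i : use the swap as an injection
      apply Finset.card_le_card_of_injOn (Equiv.swap i0 j0)
      · intro k hk
        rw [Finset.mem_coe] at hk ⊢
        rw [Finset.mem_filter] at hk ⊢
        refine ⟨Finset.mem_univ _, ?_, ?_⟩
        · rcases Equiv.swap_apply_def i0 j0 k with _
          by_cases h1 : k = i0
          · subst h1; rw [Equiv.swap_apply_left]; exact hc
          by_cases h2 : k = j0
          · subst h2; rw [Equiv.swap_apply_right]; exact le_trans (le_of_lt hij) hc
          · rw [Equiv.swap_apply_of_ne_of_ne h1 h2]; exact hk.2.1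
        · by_cases h1 : k = i0
          · subst h1; rw [Equiv.swap_apply_left, hb2]; exact hk.2.2
          by_cases h2 : k = j0
          · subst h2; rw [Equiv.swap_apply_right, hb1]; exact hk.2.2
          · rw [Equiv.swap_apply_of_ne_of_ne h1 h2, ← heq k h1 h2]; exact hk.2.2
      · exact (Equiv.injective _).injOn
    · -- j0 > i : subset
      apply Finset.card_le_card
      intro k hk
      rw [Finset.mem_filter] at hk ⊢
      refine ⟨hk.1, hk.2.1, ?_⟩
      have hkj0 : k ≠ j0 := fun h => absurd (h ▸ hk.2.1) (not_le.mpr hc)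
      by_cases h1 : k = i0
      · subst h1
        have h3 := hk.2.2
        omega
      · rw [← heq k h1 hkj0]; exact hk.2.2

lemma le_mono {n : ℕ} {a b : Fin n → ℕ} (h : BCRle n a b) (i : Fin n) (j : ℕ) :
    Fcnt n a i j ≤ Fcnt n b i j := by
  induction h with
  | refl => exact le_refl _
  | tail _ hstep ih => exact le_trans ih (step_mono hstep i j)

/-- Forward direction: BCR order implies fixed-point inclusion (needs only that `y`
is upper triangular). -/
lemma psiFix_subset_of_le {n : ℕ} {x y : Fin n → ℕ} (h : BCRle n x y)
    (hupy : ∀ i : Fin n, y i ≤ i.val + 1) : psiFix n x ⊆ psiFix n y := by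
  intro i hi
  rw [psiFix, Finset.mem_filter] at hi ⊢
  refine ⟨Finset.mem_univ _, ?_⟩
  have h1 : 1 ≤ Fcnt n x i (i.val + 1) := by
    rw [Fcnt]
    refine Finset.card_pos.mpr ⟨i, Finset.mem_filter.mpr ⟨Finset.mem_univ _, le_refl _, ?_⟩⟩
    omega
  have h2 := le_trans h1 (le_mono h i (i.val + 1))
  rw [Fcnt] at h2
  have h3 : (Finset.univ.filter (fun k => k ≤ i ∧ i.val + 1 ≤ y k)).Nonempty :=
    Finset.card_pos.mp (by omega)
  obtain ⟨k, hk⟩ := h3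
  rw [Finset.mem_filter] at hk
  have hky := hupy k
  have hki : k.val ≤ i.val := hk.2.1
  have : k = i := Fin.ext (by omega)
  rw [← this]
  omega


variable {n : ℕ} {T : Finset (Fin n)} {s m : Fin n}

/-- `canon` is unchanged at `m` when erasing `s`, provided some element of `T` other
than `s` lies strictly between `s` and `m` whenever `s < m` and `m ∈ T`. -/
lemma canon_erase_eq (hs : s ∈ T) (hm : m ≠ s)
    (hj : s < m → m ∈ T → ∃ j, j ∈ T ∧ j ≠ s ∧ s < j ∧ j < m) :
    canon n T m = canon n (T.erase s) m := by
  by_cases hmT : m ∈ T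
  · have hmE : m ∈ T.erase s := Finset.mem_erase.mpr ⟨hm, hmT⟩
    rw [canon_mem hmT, canon_mem hmE]
    by_cases hsm : s < m
    · obtain ⟨j, hjT, hjs, hsj, hjm⟩ := hj hsm hmT
      have hjF : j ∈ (T.erase s).filter (fun t => t < m) :=
        Finset.mem_filter.mpr ⟨Finset.mem_erase.mpr ⟨hjs, hjT⟩, hjm⟩
      refine le_antisymm (Finset.sup_le fun t ht => ?_) ?_
      · rw [Finset.mem_filter] at ht
        by_cases hts : t = s
        · have h1 : (fun t : Fin n => t.val + 1) j ≤
              ((T.erase s).filter (fun t => t < m)).sup (fun t : Fin n => t.val + 1) :=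
            Finset.le_sup (f := fun t : Fin n => t.val + 1) hjF
          have h2 : t.val < j.val := by rw [hts]; exact hsj
          simp only at h1
          omega
        · exact Finset.le_sup (f := fun t : Fin n => t.val + 1)
            (Finset.mem_filter.mpr ⟨Finset.mem_erase.mpr ⟨hts, ht.1⟩, ht.2⟩)
      · refine Finset.sup_mono (Finset.filter_subset_filter _ ?_)
        exact Finset.erase_subset s T
    · have : (T.erase s).filter (fun t => t < m) = T.filter (fun t => t < m) := by
        ext t
        simp only [Finset.mem_filter, Finset.mem_erase]
        constructor
        · rintro ⟨⟨-, h1⟩, h2⟩; exact ⟨h1, h2⟩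
        · rintro ⟨h1, h2⟩
          refine ⟨⟨fun hts => hsm ?_, h1⟩, h2⟩
          rw [← hts]; exact h2
      rw [this]
  · have hmE : m ∉ T.erase s := fun h => hmT (Finset.mem_of_mem_erase h)
    rw [canon_not_mem hmT, canon_not_mem hmE]

/-- A single erase is a single BCR step. -/
lemma step_erase (hs : s ∈ T) (hne : (T.erase s).Nonempty) :
    BCRStep n (canon n T) (canon n (T.erase s)) := by
  refine ⟨canon_isRook T, canon_isRook _, ?_⟩
  by_cases hL : ∃ u ∈ T, u < s
  · by_cases hU : ∃ u ∈ T, s < u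
    · -- Case C : middle element, swap step
      right
      obtain ⟨u0, hu0T, hu0⟩ := hL
      have hLne : (T.filter (fun t => t < s)).Nonempty := ⟨u0, Finset.mem_filter.mpr ⟨hu0T, hu0⟩⟩
      obtain ⟨u1, hu1T, hu1⟩ := hU
      have hUne : (T.filter (fun t => s < t)).Nonempty := ⟨u1, Finset.mem_filter.mpr ⟨hu1T, hu1⟩⟩
      set p := (T.filter (fun t => t < s)).max' hLne with hp
      set j := (T.filter (fun t => s < t)).min' hUne with hjdef
      have hpm := Finset.mem_filter.mp (Finset.max'_mem _ hLne)
      have hjm := Finset.mem_filter.mp (Finset.min'_mem _ hUne)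
      have hpmax : ∀ u ∈ T, u < s → u ≤ p := by
        intro u hu huv
        have hmem : u ∈ T.filter (fun t => t < s) := Finset.mem_filter.mpr ⟨hu, huv⟩
        exact Finset.le_max' _ u hmem
      have hjmin : ∀ u ∈ T, s < u → j ≤ u := by
        intro u hu huv
        have hmem : u ∈ T.filter (fun t => s < t) := Finset.mem_filter.mpr ⟨hu, huv⟩
        exact Finset.min'_le _ u hmem
      refine ⟨s, j, hjm.2, ?_, ?_, ?_, ?_⟩
      · -- b s = a j
        have h1 : canon n (T.erase s) s = s.val + 1 :=
          canon_not_mem (Finset.notMem_erase s T)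
        have h2 : canon n T j = s.val + 1 := by
          refine canon_eq_of hjm.1 hs hjm.2 fun u hu huj => ?_
          by_contra hc
          push_neg at hc
          exact absurd (hjmin u hu hc) (not_le.mpr huj)
        rw [h1, h2]
      · -- b j = a s
        have h1 : canon n T s = p.val + 1 := canon_eq_of hs hpm.1 hpm.2 hpmax
        have h2 : canon n (T.erase s) j = p.val + 1 := by
          have hps : p ≠ s := Fin.ne_of_lt hpm.2
          refine canon_eq_of (Finset.mem_erase.mpr ⟨Ne.symm (Fin.ne_of_lt hjm.2), hjm.1⟩)
            (Finset.mem_erase.mpr ⟨hps, hpm.1⟩) (lt_trans hpm.2 hjm.2) ?_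
          intro u hu huj
          rw [Finset.mem_erase] at hu
          rcases lt_trichotomy u s with h | h | h
          · exact hpmax u hu.2 h
          · exact absurd h hu.1
          · exact absurd (hjmin u hu.2 h) (not_le.mpr huj)
        rw [h1, h2]
      · -- b j < b s
        have h1 : canon n (T.erase s) s = s.val + 1 :=
          canon_not_mem (Finset.notMem_erase s T)
        have h2 : canon n (T.erase s) j = p.val + 1 := by
          have hps : p ≠ s := Fin.ne_of_lt hpm.2
          refine canon_eq_of (Finset.mem_erase.mpr ⟨Ne.symm (Fin.ne_of_lt hjm.2), hjm.1⟩)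
            (Finset.mem_erase.mpr ⟨hps, hpm.1⟩) (lt_trans hpm.2 hjm.2) ?_
          intro u hu huj
          rw [Finset.mem_erase] at hu
          rcases lt_trichotomy u s with h | h | h
          · exact hpmax u hu.2 h
          · exact absurd h hu.1
          · exact absurd (hjmin u hu.2 h) (not_le.mpr huj)
        rw [h1, h2]
        have : p.val < s.val := hpm.2
        omega
      · -- other positions
        intro m hms hmj
        refine canon_erase_eq hs hms fun hsm hmT => ⟨j, hjm.1, Fin.ne_of_gt hjm.2, hjm.2, ?_⟩
        exact lt_of_le_of_ne (hjmin m hmT hsm) (Ne.symm hmj)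
    · -- Case B : s is the maximum, raise step
      left
      push_neg at hU
      obtain ⟨u0, hu0T, hu0⟩ := hL
      have hLne : (T.filter (fun t => t < s)).Nonempty := ⟨u0, Finset.mem_filter.mpr ⟨hu0T, hu0⟩⟩
      set p := (T.filter (fun t => t < s)).max' hLne
      have hpm := Finset.mem_filter.mp (Finset.max'_mem _ hLne)
      have hpmax : ∀ u ∈ T, u < s → u ≤ p := by
        intro u hu huv
        have hmem : u ∈ T.filter (fun t => t < s) := Finset.mem_filter.mpr ⟨hu, huv⟩
        exact Finset.le_max' _ u hmem
      refine ⟨s, ?_, ?_⟩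
      · rw [canon_eq_of hs hpm.1 hpm.2 hpmax, canon_not_mem (Finset.notMem_erase s T)]
        have : p.val < s.val := hpm.2
        omega
      · intro m hms
        refine canon_erase_eq hs hms fun hsm hmT => absurd hsm (not_lt.mpr (hU m hmT))
  · -- Case A : s is the minimum, swap with successor
    right
    push_neg at hL
    have hallgt : ∀ u ∈ T.erase s, s < u := by
      intro u hu
      rw [Finset.mem_erase] at hu
      exact lt_of_le_of_ne (hL u hu.2) (Ne.symm hu.1)
    set j := (T.erase s).min' hne with hjdef
    have hjE := (T.erase s).min'_mem hne
    have hjmem := Finset.mem_erase.mp hjE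
    have hsj : s < j := hallgt j hjE
    refine ⟨s, j, hsj, ?_, ?_, ?_, ?_⟩
    · -- b s = a j
      have h1 : canon n (T.erase s) s = s.val + 1 := canon_not_mem (Finset.notMem_erase s T)
      have h2 : canon n T j = s.val + 1 := by
        refine canon_eq_of hjmem.2 hs hsj fun u hu huj => ?_
        by_contra hc
        push_neg at hc
        have huE : u ∈ T.erase s := Finset.mem_erase.mpr ⟨Fin.ne_of_gt hc, hu⟩
        exact absurd (Finset.min'_le _ u huE) (not_le.mpr huj)
      rw [h1, h2]
    · -- b j = a s = 0
      have h1 : canon n T s = 0 := canon_eq_zero hs fun u hu => not_lt.mpr (hL u hu)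
      have h2 : canon n (T.erase s) j = 0 := by
        refine canon_eq_zero hjE fun u hu => ?_
        exact not_lt.mpr (Finset.min'_le _ u hu)
      rw [h1, h2]
    · -- b j < b s
      rw [canon_not_mem (Finset.notMem_erase s T),
        canon_eq_zero hjE fun u hu => not_lt.mpr (Finset.min'_le _ u hu)]
      omega
    · intro m hms hmj
      refine canon_erase_eq hs hms fun hsm hmT => ?_
      have hmE : m ∈ T.erase s := Finset.mem_erase.mpr ⟨hms, hmT⟩
      exact ⟨j, hjmem.2, hjmem.1, hsj, lt_of_le_of_ne (Finset.min'_le _ m hmE) (Ne.symm hmj)⟩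

/-- Chains of erases: `S ⊆ T` nonempty gives `canon T ≤ canon S`. -/
lemma chain (S : Finset (Fin n)) (hS : S.Nonempty) :
    ∀ T : Finset (Fin n), S ⊆ T → BCRle n (canon n T) (canon n S) := by
  intro T
  induction T using Finset.strongInduction with
  | _ T ih =>
    intro hsub
    by_cases h : T = S
    · subst h; exact Relation.ReflTransGen.refl
    · have hss : S ⊂ T := lt_of_le_of_ne hsub (Ne.symm h)
      obtain ⟨t, htT, htS⟩ := Finset.exists_of_ssubset hss
      have hsub' : S ⊆ T.erase t := Finset.subset_erase.mpr ⟨hsub, htS⟩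
      have hne : (T.erase t).Nonempty := hS.mono hsub'
      exact Relation.ReflTransGen.head (step_erase htT hne)
        (ih (T.erase t) (Finset.erase_ssubset htT) hsub')

end Stmt11Aux

open Stmt11Aux in
/-- for `n ≥ 1`, `ψ` is an order isomorphism from `P_{n,n−1}`
(upper triangular `n`-rooks of rank `n−1` under the Bruhat–Chevalley–Renner
order) onto the proper subsets of `{1,…,n}` ordered by inclusion. -/
theorem stmt11 (n : ℕ) (hn : 1 ≤ n) :
    (∀ x : Fin n → ℕ, IsRook n x → (∀ i : Fin n, x i ≤ i.val + 1) →
        rookRank n x = n - 1 → psiFix n x ≠ Finset.univ) ∧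
    (∀ x y : Fin n → ℕ,
        IsRook n x → (∀ i : Fin n, x i ≤ i.val + 1) → rookRank n x = n - 1 →
        IsRook n y → (∀ i : Fin n, y i ≤ i.val + 1) → rookRank n y = n - 1 →
        psiFix n x = psiFix n y → x = y) ∧
    (∀ s : Finset (Fin n), s ≠ Finset.univ →
        ∃ x : Fin n → ℕ, IsRook n x ∧ (∀ i : Fin n, x i ≤ i.val + 1) ∧
          rookRank n x = n - 1 ∧ psiFix n x = s) ∧
    (∀ x y : Fin n → ℕ,
        IsRook n x → (∀ i : Fin n, x i ≤ i.val + 1) → rookRank n x = n - 1 →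
        IsRook n y → (∀ i : Fin n, y i ≤ i.val + 1) → rookRank n y = n - 1 →
        (BCRle n x y ↔ psiFix n x ⊆ psiFix n y)) := by
  have c1 : ∀ x : Fin n → ℕ, IsRook n x → (∀ i : Fin n, x i ≤ i.val + 1) →
      rookRank n x = n - 1 → psiFix n x ≠ Finset.univ := by
    intro x hx hup hrk hcontra
    have hall : ∀ i : Fin n, x i = i.val + 1 := by
      intro i
      have : i ∈ psiFix n x := hcontra ▸ Finset.mem_univ i
      exact (Finset.mem_filter.mp this).2
    have huniv : Finset.univ.filter (fun i => x i ≠ 0) = Finset.univ := by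
      ext i
      simp [hall i]
    rw [rookRank, huniv, Finset.card_univ, Fintype.card_fin] at hrk
    omega
  have hTne : ∀ x : Fin n → ℕ, IsRook n x → (∀ i : Fin n, x i ≤ i.val + 1) →
      rookRank n x = n - 1 →
      (Finset.univ.filter (fun i => x i ≠ i.val + 1)).Nonempty := by
    intro x hx hup hrk
    have hne := c1 x hx hup hrk
    have : ∃ i : Fin n, x i ≠ i.val + 1 := by
      by_contra hall
      push_neg at hall
      apply hne
      ext i
      simp [psiFix, hall i]
    obtain ⟨i0, hi0⟩ := this
    exact ⟨i0, Finset.mem_filter.mpr ⟨Finset.mem_univ _, hi0⟩⟩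
  refine ⟨c1, ?_, ?_, ?_⟩
  · -- injectivity
    intro x y hx hupx hrkx hy hupy hrky hpsi
    rw [eq_canon hn hx hupx hrkx, eq_canon hn hy hupy hrky]
    have hfe : (Finset.univ.filter (fun i => x i ≠ i.val + 1)) =
        (Finset.univ.filter (fun i => y i ≠ i.val + 1)) := by
      ext i
      have := Finset.ext_iff.mp hpsi i
      simp only [psiFix, Finset.mem_filter, Finset.mem_univ, true_and] at this ⊢
      tauto
    rw [hfe]
  · -- surjectivity
    intro s hs
    have hT : sᶜ.Nonempty := by
      rw [Finset.nonempty_iff_ne_empty]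
      intro h
      apply hs
      rwa [Finset.compl_eq_empty_iff] at h
    refine ⟨canon n sᶜ, canon_isRook _, fun i => canon_le _ i, canon_rank hT, ?_⟩
    rw [psiFix_canon, compl_compl]
  · -- order isomorphism
    intro x y hx hupx hrkx hy hupy hrky
    constructor
    · intro h
      exact psiFix_subset_of_le h hupy
    · intro hsub
      have hyne := hTne y hy hupy hrky
      have hsub' : (Finset.univ.filter (fun i => y i ≠ i.val + 1)) ⊆
          (Finset.univ.filter (fun i => x i ≠ i.val + 1)) := by
        intro i hi
        rw [Finset.mem_filter] at hi ⊢
        refine ⟨Finset.mem_univ _, fun hxe => hi.2 ?_⟩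
        have : i ∈ psiFix n x := Finset.mem_filter.mpr ⟨Finset.mem_univ _, hxe⟩
        exact (Finset.mem_filter.mp (hsub this)).2
      rw [eq_canon hn hx hupx hrkx, eq_canon hn hy hupy hrky]
      exact chain _ hyne _ hsub'
end
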